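/- arXiv:1109.0232 — 4 statements merged into one kernel-verified Lean document; each statement's English description precedes it below -/
import Mathlib

section
/- Let N ∈ ℕ, Q ≥ 1, and let k(1),…,k(N) be complex numbers. Let ρ(a, q) ≥ 0 (depending only on a mod q) satisfy ρ(0,1) = 1 and ∑_{a mod rs, a ≡ b mod r} ρ(a, rs) = ρ(b, r) for all b, r, s. Let ω(1),…,ω(N) be complex numbers, S := ∑_{n≤N} ω(n), and suppose there are E ≥ 1 and W ≥ 0 such that |∑_{n≤N, n≡a mod q} k(n) − ρ(a,q)·S| ≤ E for all q ≤ Q and all residue classes a mod q, and |∑_{n≤N, n≡a mod q} ω(n) − S/q| ≤ W for all q ≤ Q² and all a mod q. Define k̂(n) := ω(n)·∑_{q≤Q} ∑_{a mod q, gcd(a,q)=1} e_q(−an)·∑_{c mod q} ρ(c,q)·e_q(ac). Then for every h ≤ Q and every residue class b mod h, |∑_{n≤N, n≡b mod h} (k(n) − k̂(n))| ≤ W·Q³ + E. -/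
/-- The additive character `e_q(m) = e^{2πim/q}`. -/
noncomputable def eChar (q : ℕ) (m : ℤ) : ℂ :=
  Complex.exp (2 * Real.pi * Complex.I * (m : ℂ) / (q : ℂ))

lemma eChar_add (q : ℕ) (m m' : ℤ) : eChar q (m + m') = eChar q m * eChar q m' := by
  rw [eChar, eChar, eChar, ← Complex.exp_add]
  congr 1
  push_cast; ring

lemma abs_eChar (q : ℕ) (m : ℤ) : ‖(eChar q m)‖ = 1 := by
  have : (2 * Real.pi * Complex.I * (m : ℂ) / (q : ℂ)) =
      ((2 * Real.pi * m / q : ℝ) : ℂ) * Complex.I := by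
    push_cast; ring
  rw [eChar, this, Complex.norm_exp_ofReal_mul_I]

lemma eChar_zero (q : ℕ) : eChar q 0 = 1 := by simp [eChar]

lemma eChar_nat_mul (q : ℕ) (m : ℤ) (u : ℕ) : eChar q (m * u) = eChar q m ^ u := by
  rw [eChar, eChar, ← Complex.exp_nat_mul]
  congr 1
  push_cast; ring

lemma eChar_eq_one (q : ℕ) (hq : 0 < q) (m : ℤ) : eChar q m = 1 ↔ (q : ℤ) ∣ m := by
  have hq0 : (q : ℂ) ≠ 0 := Nat.cast_ne_zero.mpr hq.ne'
  have h2 : (2 * Real.pi * Complex.I : ℂ) ≠ 0 := by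
    simp [Real.pi_ne_zero, Complex.I_ne_zero]
  rw [eChar, Complex.exp_eq_one_iff]
  constructor
  · rintro ⟨n, hn⟩
    refine ⟨n, ?_⟩
    have hmc : (m : ℂ) = n * q := by
      field_simp at hn
      have hn' : 2 * (Real.pi:ℂ) * Complex.I * (m:ℂ) = 2 * (Real.pi:ℂ) * Complex.I * (n * q) := by
        linear_combination (2 * (Real.pi:ℂ) * Complex.I) * hn
      have := mul_left_cancel₀ h2 hn'
      linear_combination this
    have : m = n * q := by exact_mod_cast hmc
    exact this.trans (mul_comm _ _)
  · rintro ⟨n, rfl⟩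
    exact ⟨n, by push_cast; field_simp⟩

lemma eChar_congr (q : ℕ) (hq : 0 < q) {m m' : ℤ} (h : m % q = m' % q) :
    eChar q m = eChar q m' := by
  obtain ⟨t, ht⟩ : (q : ℤ) ∣ (m - m') := (Int.ModEq.symm h).dvd
  have : m = m' + q * t := by omega
  rw [this, eChar_add]
  have h1 : eChar q ((q : ℤ) * t) = 1 := by
    rw [eChar]
    have : (2 * Real.pi * Complex.I * ((q * t : ℤ) : ℂ) / (q : ℂ)) = t * (2 * Real.pi * Complex.I) := by
      have hq0 : (q : ℂ) ≠ 0 := Nat.cast_ne_zero.mpr hq.ne'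
      push_cast
      field_simp
    rw [this]
    exact Complex.exp_int_mul_two_pi_mul_I t
  rw [h1, mul_one]

lemma eChar_geom (q : ℕ) (hq : 0 < q) (m : ℤ) :
    ∑ u ∈ Finset.range q, eChar q (m * u) = if (q : ℤ) ∣ m then (q : ℂ) else 0 := by
  by_cases hd : (q : ℤ) ∣ m
  · simp only [hd, if_true]
    have : ∀ u ∈ Finset.range q, eChar q (m * u) = 1 := by
      intro u _
      rw [eChar_nat_mul, (eChar_eq_one q hq m).mpr hd, one_pow]
    rw [Finset.sum_congr rfl this]
    simp
  · simp only [hd, if_false]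
    have hz : eChar q m ≠ 1 := fun h => hd ((eChar_eq_one q hq m).mp h)
    have hsum : ∀ u ∈ Finset.range q, eChar q (m * u) = eChar q m ^ u :=
      fun u _ => eChar_nat_mul q m u
    rw [Finset.sum_congr rfl hsum]
    have hpow : eChar q m ^ q = 1 := by
      rw [← eChar_nat_mul, (eChar_eq_one q hq _).mpr ⟨m, mul_comm m q⟩]
    have := geom_sum_mul (eChar q m) q
    rw [hpow, sub_self] at this
    rcases mul_eq_zero.mp this with h | h
    · exact h
    · exact (hz (sub_eq_zero.mp h)).elim

lemma eChar_div_mul (q h : ℕ) (hq : 0 < q) (hh : 0 < h) (hd : q ∣ h) (x : ℤ) :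
    eChar h ((h / q : ℕ) * x) = eChar q x := by
  obtain ⟨s, rfl⟩ := hd
  have hs : 0 < s := Nat.pos_of_mul_pos_left (by rwa [mul_comm] at hh)
  rw [Nat.mul_div_cancel_left s hq]
  rw [eChar, eChar]
  congr 1
  have hq0 : (q : ℂ) ≠ 0 := Nat.cast_ne_zero.mpr hq.ne'
  have hs0 : (s : ℂ) ≠ 0 := Nat.cast_ne_zero.mpr hs.ne'
  push_cast
  field_simp

lemma sum_divisors_coprime (h : ℕ) (hh : 0 < h) (f : ℕ → ℂ) :
    ∑ q ∈ h.divisors, ∑ a ∈ (Finset.range q).filter (fun a => Nat.gcd a q = 1),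
      f (a * (h / q)) = ∑ b ∈ Finset.range h, f b := by
  rw [show (∑ q ∈ h.divisors, ∑ a ∈ (Finset.range q).filter (fun a => Nat.gcd a q = 1),
      f (a * (h / q)))
    = ∑ p ∈ h.divisors.sigma (fun q => (Finset.range q).filter (fun a => Nat.gcd a q = 1)),
      f (p.2 * (h / p.1)) from (Finset.sum_sigma h.divisors (fun q => (Finset.range q).filter (fun a => Nat.gcd a q = 1)) (fun p => f (p.2 * (h / p.1)))).symm]
  refine Finset.sum_nbij' (fun p => p.2 * (h / p.1))
    (fun b => ⟨h / Nat.gcd b h, b / Nat.gcd b h⟩) ?_ ?_ ?_ ?_ ?_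
  · rintro ⟨q, a⟩ hp
    simp only [Finset.mem_sigma, Nat.mem_divisors, Finset.mem_filter, Finset.mem_range] at hp
    obtain ⟨⟨hqd, _⟩, ha, hcop⟩ := hp
    have hq : 0 < q := Nat.pos_of_ne_zero (by rintro rfl; simp at ha)
    have hd : 0 < h / q := Nat.div_pos (Nat.le_of_dvd hh hqd) hq
    simp only [Finset.mem_range]
    calc a * (h / q) < q * (h / q) := (Nat.mul_lt_mul_right hd).mpr ha
    _ = h := Nat.mul_div_cancel' hqd
  · intro b hb
    simp only [Finset.mem_range] at hb
    have hg : 0 < Nat.gcd b h := Nat.gcd_pos_of_pos_right b hh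
    have hgb : Nat.gcd b h ∣ b := Nat.gcd_dvd_left b h
    have hgh : Nat.gcd b h ∣ h := Nat.gcd_dvd_right b h
    simp only [Finset.mem_sigma, Nat.mem_divisors, Finset.mem_filter, Finset.mem_range]
    refine ⟨⟨Nat.div_dvd_of_dvd hgh, hh.ne'⟩, ?_, Nat.coprime_div_gcd_div_gcd hg⟩
    exact Nat.div_lt_div_of_lt_of_dvd hgh hb
  · rintro ⟨q, a⟩ hp
    simp only [Finset.mem_sigma, Nat.mem_divisors, Finset.mem_filter, Finset.mem_range] at hp
    obtain ⟨⟨hqd, _⟩, ha, hcop⟩ := hp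
    have hq : 0 < q := Nat.pos_of_ne_zero (by rintro rfl; simp at ha)
    have hd : 0 < h / q := Nat.div_pos (Nat.le_of_dvd hh hqd) hq
    have hgcd : Nat.gcd (a * (h / q)) h = h / q := by
      calc Nat.gcd (a * (h / q)) h = Nat.gcd (a * (h / q)) (q * (h / q)) := by
            rw [Nat.mul_div_cancel' hqd]
        _ = h / q := by rw [Nat.gcd_mul_right, hcop, one_mul]
    have hstep : h / (h/q) = q := by
      rw [Nat.div_div_self hqd hh.ne']
    simp only [hgcd, hstep, Nat.mul_div_cancel _ hd]
  · intro b hb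
    simp only [Finset.mem_range] at hb
    have hg : 0 < Nat.gcd b h := Nat.gcd_pos_of_pos_right b hh
    have hgb : Nat.gcd b h ∣ b := Nat.gcd_dvd_left b h
    have hgh : Nat.gcd b h ∣ h := Nat.gcd_dvd_right b h
    simp only
    rw [Nat.div_div_self hgh hh.ne', Nat.div_mul_cancel hgb]
  · rintro ⟨q, a⟩ _
    rfl

lemma eChar_congr_dvd (q : ℕ) (hq : 0 < q) {m m' : ℤ} (hd : (q : ℤ) ∣ m - m') :
    eChar q m = eChar q m' := by
  obtain ⟨t, ht⟩ := hd
  have : m = m' + q * t := by omega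
  rw [this, eChar_add]
  have h1 : eChar q ((q : ℤ) * t) = 1 :=
    (eChar_eq_one q hq _).mpr ⟨t, rfl⟩
  rw [h1, mul_one]

lemma int_dvd_sub_iff (h d b : ℕ) : ((h : ℤ) ∣ (d : ℤ) - (b : ℤ)) ↔ d % h = b % h := by
  constructor
  · intro hx
    have hmod : (b : ℤ) % h = (d : ℤ) % h := Int.modEq_iff_dvd.mpr hx
    have : ((d % h : ℕ) : ℤ) = ((b % h : ℕ) : ℤ) := by push_cast; exact hmod.symm
    exact Nat.cast_inj.mp this
  · intro hx
    have hc := congrArg (Nat.cast : ℕ → ℤ) hx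
    push_cast at hc
    exact Int.ModEq.dvd (hc.symm : (b : ℤ) % h = (d : ℤ) % h)

lemma ramanujan_divisor_sum (h : ℕ) (hh : 0 < h) (m : ℤ) :
    ∑ q ∈ h.divisors, ∑ a ∈ (Finset.range q).filter (fun a => Nat.gcd a q = 1),
      eChar q ((a : ℤ) * m) = if (h : ℤ) ∣ m then (h : ℂ) else 0 := by
  have hgeom := eChar_geom h hh m
  have hswap : ∑ u ∈ Finset.range h, eChar h (m * (u : ℤ)) =
      ∑ u ∈ Finset.range h, eChar h ((u : ℤ) * m) := by
    refine Finset.sum_congr rfl fun u _ => by rw [mul_comm]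
  rw [← hgeom, hswap, ← sum_divisors_coprime h hh (fun b => eChar h ((b : ℤ) * m))]
  apply Finset.sum_congr rfl
  intro q hq
  apply Finset.sum_congr rfl
  intro a _
  simp only [Nat.mem_divisors] at hq
  have hq0 : 0 < q := Nat.pos_of_dvd_of_pos hq.1 hh
  have : ((a * (h / q) : ℕ) : ℤ) * m = ((h / q : ℕ) : ℤ) * ((a : ℤ) * m) := by
    push_cast; ring
  rw [this, eChar_div_mul q h hq0 hh hq.1]

lemma rho_main_identity (ρ : ℕ → ℕ → ℝ)
    (hρper : ∀ a b q, a % q = b % q → ρ a q = ρ b q)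
    (hρcomb : ∀ (b r s : ℕ), 0 < r → 0 < s →
      ∑ a ∈ Finset.range (r * s), (if a % r = b % r then ρ a (r * s) else 0) = ρ b r)
    (h : ℕ) (hh : 0 < h) (b : ℕ) :
    ∑ q ∈ h.divisors, ∑ a ∈ (Finset.range q).filter (fun a => Nat.gcd a q = 1),
      ∑ c ∈ Finset.range q, (ρ c q : ℂ) * eChar q ((a : ℤ) * ((c : ℤ) - (b : ℤ)))
      = (h : ℂ) * (ρ b h : ℂ) := by
  have step1 : ∀ q ∈ h.divisors, ∀ a : ℕ,
      ∑ c ∈ Finset.range q, (ρ c q : ℂ) * eChar q ((a : ℤ) * ((c : ℤ) - (b : ℤ)))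
      = ∑ d ∈ Finset.range h, (ρ d h : ℂ) * eChar q ((a : ℤ) * ((d : ℤ) - (b : ℤ))) := by
    intro q hq a
    simp only [Nat.mem_divisors] at hq
    have hq0 : 0 < q := Nat.pos_of_dvd_of_pos hq.1 hh
    have hs0 : 0 < h / q := Nat.div_pos (Nat.le_of_dvd hh hq.1) hq0
    have hmul : q * (h / q) = h := Nat.mul_div_cancel' hq.1
    have hrw : ∀ c : ℕ, ρ c q = ∑ d ∈ Finset.range h, (if d % q = c % q then ρ d h else 0) := by
      intro c
      have := hρcomb c q (h / q) hq0 hs0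
      rw [hmul] at this
      exact this.symm
    calc ∑ c ∈ Finset.range q, (ρ c q : ℂ) * eChar q ((a : ℤ) * ((c : ℤ) - (b : ℤ)))
        = ∑ c ∈ Finset.range q, ∑ d ∈ Finset.range h,
            (if d % q = c % q then (ρ d h : ℂ) else 0) * eChar q ((a : ℤ) * ((c : ℤ) - (b : ℤ))) := by
          refine Finset.sum_congr rfl fun c _ => ?_
          rw [hrw c]
          push_cast
          rw [Finset.sum_mul]
          refine Finset.sum_congr rfl fun d _ => ?_
          rw [apply_ite (fun x : ℝ => (x : ℂ))]
          push_cast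
          rfl
      _ = ∑ d ∈ Finset.range h, ∑ c ∈ Finset.range q,
            (if d % q = c % q then (ρ d h : ℂ) else 0) * eChar q ((a : ℤ) * ((c : ℤ) - (b : ℤ))) :=
          Finset.sum_comm
      _ = ∑ d ∈ Finset.range h, (ρ d h : ℂ) * eChar q ((a : ℤ) * ((d : ℤ) - (b : ℤ))) := by
          refine Finset.sum_congr rfl fun d _ => ?_
          rw [Finset.sum_eq_single (d % q)]
          · have hcond : d % q = d % q % q := (Nat.mod_mod_of_dvd d dvd_rfl).symm
            rw [if_pos hcond]
            congr 1
            apply eChar_congr_dvd q hq0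
            have hdq : (q : ℤ) ∣ ((d % q : ℕ) : ℤ) - (d : ℤ) := by
              rw [int_dvd_sub_iff]
              exact Nat.mod_mod_of_dvd d dvd_rfl
            have heq : (a : ℤ) * (((d % q : ℕ) : ℤ) - (b : ℤ)) - (a : ℤ) * ((d : ℤ) - (b : ℤ))
                = (a : ℤ) * (((d % q : ℕ) : ℤ) - (d : ℤ)) := by ring
            rw [heq]
            exact Dvd.dvd.mul_left hdq _
          · intro c hc hne
            rw [Finset.mem_range] at hc
            rw [if_neg]
            · ring
            · intro hceq
              have := Nat.mod_eq_of_lt hc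
              omega
          · intro hmem
            exact absurd (Finset.mem_range.mpr (Nat.mod_lt d hq0)) hmem
  calc ∑ q ∈ h.divisors, ∑ a ∈ (Finset.range q).filter (fun a => Nat.gcd a q = 1),
        ∑ c ∈ Finset.range q, (ρ c q : ℂ) * eChar q ((a : ℤ) * ((c : ℤ) - (b : ℤ)))
      = ∑ q ∈ h.divisors, ∑ d ∈ Finset.range h,
          ∑ a ∈ (Finset.range q).filter (fun a => Nat.gcd a q = 1),
          (ρ d h : ℂ) * eChar q ((a : ℤ) * ((d : ℤ) - (b : ℤ))) := by
        refine Finset.sum_congr rfl fun q hq => ?_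
        rw [Finset.sum_congr rfl (fun a _ => step1 q hq a)]
        exact Finset.sum_comm
    _ = ∑ d ∈ Finset.range h, (ρ d h : ℂ) *
          (∑ q ∈ h.divisors, ∑ a ∈ (Finset.range q).filter (fun a => Nat.gcd a q = 1),
            eChar q ((a : ℤ) * ((d : ℤ) - (b : ℤ)))) := by
        rw [Finset.sum_comm]
        refine Finset.sum_congr rfl fun d _ => ?_
        rw [Finset.mul_sum]
        refine Finset.sum_congr rfl fun q _ => ?_
        rw [Finset.mul_sum]
    _ = ∑ d ∈ Finset.range h, (ρ d h : ℂ) *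
          (if (h : ℤ) ∣ ((d : ℤ) - (b : ℤ)) then (h : ℂ) else 0) := by
        refine Finset.sum_congr rfl fun d _ => ?_
        rw [ramanujan_divisor_sum h hh]
    _ = (h : ℂ) * (ρ b h : ℂ) := by
        rw [Finset.sum_eq_single (b % h)]
        · have hd : (h : ℤ) ∣ ((b % h : ℕ) : ℤ) - (b : ℤ) := by
            rw [int_dvd_sub_iff]
            exact Nat.mod_mod_of_dvd b dvd_rfl
          rw [if_pos hd, hρper (b % h) b h (Nat.mod_mod_of_dvd b dvd_rfl)]
          ring
        · intro d hd hne
          rw [Finset.mem_range] at hd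
          rw [if_neg, mul_zero]
          rw [int_dvd_sub_iff]
          intro hx
          have := Nat.mod_eq_of_lt hd
          omega
        · intro hmem
          exact absurd (Finset.mem_range.mpr (Nat.mod_lt b hh)) hmem

/-- Lemma 4.1 (Mainapp) of Browning–Heath-Brown: the general approximation principle over ℤ.
If `k(n)` is well distributed in residue classes to moduli `q ≤ Q` with density `ρ(a,q)·S` and
error `E`, and the smooth weight `ω(n)` is equidistributed with error `W`, then the explicit
approximation `k̂(n)` built from `ρ` and `ω` satisfies
`|∑_{n ≤ N, n ≡ b (h)} (k(n) − k̂(n))| ≤ W·Q³ + E` for all `h ≤ Q` and all `b`. -/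
theorem approximation_principle_over_Z
    (N Q : ℕ) (hQ : 1 ≤ Q)
    (k : ℕ → ℂ) (ω : ℕ → ℂ) (S : ℂ)
    (hS : S = ∑ n ∈ Finset.Icc 1 N, ω n)
    (ρ : ℕ → ℕ → ℝ)
    (hρnn : ∀ a q, 0 ≤ ρ a q)
    (hρper : ∀ a b q, a % q = b % q → ρ a q = ρ b q)
    (hρone : ρ 0 1 = 1)
    (hρcomb : ∀ (b r s : ℕ), 0 < r → 0 < s →
      ∑ a ∈ Finset.range (r * s), (if a % r = b % r then ρ a (r * s) else 0) = ρ b r)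
    (E : ℝ) (hE1 : 1 ≤ E)
    (hE : ∀ q, 1 ≤ q → q ≤ Q → ∀ a : ℕ,
      ‖((∑ n ∈ (Finset.Icc 1 N).filter (fun n => n % q = a % q), k n)
          - (ρ a q : ℂ) * S)‖ ≤ E)
    (W : ℝ) (hW0 : 0 ≤ W)
    (hW : ∀ q, 1 ≤ q → q ≤ Q ^ 2 → ∀ a : ℕ,
      ‖((∑ n ∈ (Finset.Icc 1 N).filter (fun n => n % q = a % q), ω n)
          - S / (q : ℂ))‖ ≤ W)
    (khat : ℕ → ℂ)
    (hkhat : ∀ n : ℕ, khat n = ω n *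
      ∑ q ∈ Finset.Icc 1 Q,
        ∑ a ∈ (Finset.range q).filter (fun a => Nat.gcd a q = 1),
          eChar q (-(a * n : ℤ)) *
            ∑ c ∈ Finset.range q, (ρ c q : ℂ) * eChar q ((a * c : ℤ))) :
    ∀ h, 1 ≤ h → h ≤ Q → ∀ b : ℕ,
      ‖(∑ n ∈ (Finset.Icc 1 N).filter (fun n => n % h = b % h),
          (k n - khat n))‖ ≤ W * (Q : ℝ) ^ 3 + E := by
  intro h hh1 hhQ b
  have hh : 0 < h := hh1
  set b' := b % h with hb'def
  have hb'lt : b' < h := Nat.mod_lt b hh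
  have hb'mod : b' % h = b % h := Nat.mod_mod_of_dvd b dvd_rfl
  set F : Finset ℕ := (Finset.Icc 1 N).filter (fun n => n % h = b % h) with hFdef
  set G : ℕ → ℕ → ℂ :=
    fun q a => ∑ c ∈ Finset.range q, (ρ c q : ℂ) * eChar q ((a * c : ℤ)) with hGdef
  set T : ℕ → Finset ℕ :=
    fun q => (Finset.range (h * q)).filter (fun t => t % h = b % h) with hTdef
  set Tw : ℕ → ℕ → ℂ := fun q t =>
    ∑ n ∈ (Finset.Icc 1 N).filter (fun n => n % (h * q) = t % (h * q)), ω n with hTwdef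
  -- sum of rho over residues is 1
  have hrho1 : ∀ q : ℕ, 0 < q → ∑ c ∈ Finset.range q, ρ c q = 1 := by
    intro q hq
    have := hρcomb 0 1 q one_pos hq
    simpa [Nat.mod_one, hρone] using this
  -- bound on G
  have hGbound : ∀ q : ℕ, 0 < q → ∀ a : ℕ, ‖(G q a)‖ ≤ 1 := by
    intro q hq a
    calc ‖(G q a)‖
        ≤ ∑ c ∈ Finset.range q, ‖((ρ c q : ℂ) * eChar q ((a * c : ℤ)))‖ :=
          norm_sum_le _ _
      _ = ∑ c ∈ Finset.range q, ρ c q := by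
          refine Finset.sum_congr rfl fun c _ => ?_
          rw [norm_mul, abs_eChar, mul_one, Complex.norm_real, Real.norm_eq_abs, abs_of_nonneg (hρnn c q)]
      _ = 1 := hrho1 q hq
  -- swap sums
  have hswap : ∑ n ∈ F, khat n = ∑ q ∈ Finset.Icc 1 Q,
      ∑ a ∈ (Finset.range q).filter (fun a => Nat.gcd a q = 1),
        G q a * (∑ n ∈ F, ω n * eChar q (-(a * n : ℤ))) := by
    rw [Finset.sum_congr rfl (fun n _ => by rw [hkhat n, Finset.mul_sum])]
    rw [Finset.sum_comm]
    refine Finset.sum_congr rfl fun q _ => ?_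
    rw [Finset.sum_congr rfl (fun n (_ : n ∈ F) => Finset.mul_sum _ _ _)]
    rw [Finset.sum_comm]
    refine Finset.sum_congr rfl fun a _ => ?_
    rw [Finset.mul_sum]
    refine Finset.sum_congr rfl fun n _ => ?_
    ring
  -- fiber decomposition
  have hfib : ∀ q : ℕ, 0 < q → ∀ a : ℕ,
      ∑ n ∈ F, ω n * eChar q (-(a * n : ℤ)) =
        ∑ t ∈ T q, eChar q (-(a * t : ℤ)) * Tw q t := by
    intro q hq a
    have hhq : 0 < h * q := Nat.mul_pos hh hq
    have hmaps : ∀ n ∈ F, n % (h * q) ∈ T q := by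
      intro n hn
      simp only [hFdef, Finset.mem_filter, Finset.mem_Icc] at hn
      simp only [hTdef, Finset.mem_filter, Finset.mem_range]
      exact ⟨Nat.mod_lt n hhq, by rw [Nat.mod_mod_of_dvd n ⟨q, rfl⟩]; exact hn.2⟩
    rw [← Finset.sum_fiberwise_of_maps_to hmaps (fun n => ω n * eChar q (-(a * n : ℤ)))]
    refine Finset.sum_congr rfl fun t ht => ?_
    simp only [hTdef, Finset.mem_filter, Finset.mem_range] at ht
    have hset : F.filter (fun n => n % (h * q) = t) =
        (Finset.Icc 1 N).filter (fun n => n % (h * q) = t % (h * q)) := by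
      ext n
      simp only [hFdef, Finset.mem_filter, Finset.mem_Icc, Nat.mod_eq_of_lt ht.1]
      constructor
      · rintro ⟨⟨h1, h2⟩, h3⟩; exact ⟨h1, h3⟩
      · rintro ⟨h1, h3⟩
        refine ⟨⟨h1, ?_⟩, h3⟩
        have : n % (h * q) % h = t % h := by rw [h3]
        rw [Nat.mod_mod_of_dvd n ⟨q, rfl⟩] at this
        rw [this, ht.2]
    rw [hset]
    have hval : ∀ n ∈ (Finset.Icc 1 N).filter (fun n => n % (h * q) = t % (h * q)),
        ω n * eChar q (-(a * n : ℤ)) = ω n * eChar q (-(a * t : ℤ)) := by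
      intro n hn
      simp only [Finset.mem_filter] at hn
      congr 1
      apply eChar_congr_dvd q hq
      have hdvd1 : ((h * q : ℕ) : ℤ) ∣ (n : ℤ) - (t : ℤ) := by
        rw [int_dvd_sub_iff]; exact hn.2
      have hdvd2 : (q : ℤ) ∣ (n : ℤ) - (t : ℤ) :=
        dvd_trans (Int.natCast_dvd_natCast.mpr ⟨h, mul_comm h q⟩) hdvd1
      have : -(a * n : ℤ) - (-(a * t : ℤ)) = -((a : ℤ) * ((n : ℤ) - (t : ℤ))) := by
        push_cast; ring
      rw [this]
      exact dvd_neg.mpr (Dvd.dvd.mul_left hdvd2 _)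
    rw [Finset.sum_congr rfl hval, ← Finset.sum_mul, mul_comm]
  -- character sum over the fiber labels
  have hchar : ∀ q : ℕ, 0 < q → ∀ a : ℕ, Nat.gcd a q = 1 →
      ∑ t ∈ T q, eChar q (-(a * t : ℤ)) =
        if q ∣ h then (q : ℂ) * eChar q (-(a * b' : ℤ)) else 0 := by
    intro q hq a hcop
    have hstep : ∑ t ∈ T q, eChar q (-(a * t : ℤ)) =
        ∑ u ∈ Finset.range q, eChar q (-(a * b' : ℤ)) * eChar q ((-(a * h : ℤ)) * (u : ℤ)) := by
      refine Finset.sum_nbij' (fun t => t / h) (fun u => b' + h * u) ?_ ?_ ?_ ?_ ?_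
      · intro t ht
        simp only [hTdef, Finset.mem_filter, Finset.mem_range] at ht
        simp only [Finset.mem_range]
        exact Nat.div_lt_of_lt_mul ht.1
      · intro u hu
        simp only [Finset.mem_range] at hu
        simp only [hTdef, Finset.mem_filter, Finset.mem_range]
        constructor
        · calc b' + h * u < h + h * u := by omega
            _ = h * (u + 1) := by ring
            _ ≤ h * q := Nat.mul_le_mul_left h hu
        · rw [Nat.add_mul_mod_self_left, hb'mod]
      · intro t ht
        simp only [hTdef, Finset.mem_filter, Finset.mem_range] at ht
        have := Nat.div_add_mod t h
        have ht2 : t % h = b' := by rw [ht.2, hb'def]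
        show b' + h * (t / h) = t
        omega
      · intro u hu
        simp only [Finset.mem_range] at hu
        show (b' + h * u) / h = u
        rw [Nat.add_mul_div_left _ _ hh, Nat.div_eq_of_lt hb'lt, zero_add]
      · intro t ht
        simp only [hTdef, Finset.mem_filter, Finset.mem_range] at ht
        have ht2 : t % h = b' := by rw [ht.2, hb'def]
        have hteqn : t = b' + h * (t / h) := by
          have := Nat.div_add_mod t h
          omega
        have hteq : (t : ℤ) = (b' : ℤ) + (h : ℤ) * ((t / h : ℕ) : ℤ) := by
          exact_mod_cast congrArg (Nat.cast : ℕ → ℤ) hteqn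
        show eChar q (-(a * t : ℤ)) =
          eChar q (-(a * b' : ℤ)) * eChar q ((-(a * h : ℤ)) * ((t / h : ℕ) : ℤ))
        rw [← eChar_add]
        congr 1
        rw [hteq]
        ring
    rw [hstep, ← Finset.mul_sum, eChar_geom q hq (-(a * h : ℤ))]
    have hdvdiff : ((q : ℤ) ∣ -(a * h : ℤ)) ↔ q ∣ h := by
      rw [dvd_neg]
      rw [show ((a : ℤ) * (h : ℤ)) = ((a * h : ℕ) : ℤ) by push_cast; ring]
      rw [Int.natCast_dvd_natCast]
      constructor
      · intro hd
        exact Nat.Coprime.dvd_of_dvd_mul_left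
          (Nat.coprime_comm.mp hcop) hd
      · intro hd
        exact Dvd.dvd.mul_left hd a
    by_cases hqh : q ∣ h
    · rw [if_pos ((hdvdiff).mpr hqh), if_pos hqh]; ring
    · rw [if_neg (fun hx => hqh (hdvdiff.mp hx)), if_neg hqh, mul_zero]
  -- cardinality of fibers
  have hcardT : ∀ q : ℕ, 0 < q → (T q).card ≤ q := by
    intro q hq
    have : (T q).card ≤ (Finset.range q).card := by
      apply Finset.card_le_card_of_injOn (fun t => t / h)
      · intro t ht
        simp only [hTdef, Finset.coe_filter, Set.mem_setOf_eq, Finset.mem_range] at ht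
        simp only [Finset.mem_coe, Finset.mem_range]
        exact Nat.div_lt_of_lt_mul ht.1
      · intro t1 ht1 t2 ht2 heq
        simp only [hTdef, Finset.coe_filter, Set.mem_setOf_eq, Finset.mem_range] at ht1 ht2
        have heq' : t1 / h = t2 / h := heq
        have e1 := Nat.div_add_mod t1 h
        have e2 := Nat.div_add_mod t2 h
        rw [heq'] at e1
        have : t1 % h = t2 % h := by rw [ht1.2, ht2.2]
        omega
    simpa using this
  -- split each term into main and error parts
  have hsplitq : ∀ q ∈ Finset.Icc 1 Q, ∀ a ∈ (Finset.range q).filter (fun a => Nat.gcd a q = 1),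
      G q a * (∑ n ∈ F, ω n * eChar q (-(a * n : ℤ))) =
        G q a * ((∑ t ∈ T q, eChar q (-(a * t : ℤ))) * (S / ((h * q : ℕ) : ℂ)))
        + G q a * (∑ t ∈ T q, eChar q (-(a * t : ℤ)) * (Tw q t - S / ((h * q : ℕ) : ℂ))) := by
    intro q hq a _
    rw [Finset.mem_Icc] at hq
    rw [hfib q hq.1 a, ← mul_add]
    congr 1
    rw [Finset.sum_mul, ← Finset.sum_add_distrib]
    refine Finset.sum_congr rfl fun t _ => ?_
    ring
  set Main := ∑ q ∈ Finset.Icc 1 Q, ∑ a ∈ (Finset.range q).filter (fun a => Nat.gcd a q = 1),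
      G q a * ((∑ t ∈ T q, eChar q (-(a * t : ℤ))) * (S / ((h * q : ℕ) : ℂ))) with hMaindef
  set Err := ∑ q ∈ Finset.Icc 1 Q, ∑ a ∈ (Finset.range q).filter (fun a => Nat.gcd a q = 1),
      G q a * (∑ t ∈ T q, eChar q (-(a * t : ℤ)) * (Tw q t - S / ((h * q : ℕ) : ℂ))) with hErrdef
  have hkhatF : ∑ n ∈ F, khat n = Main + Err := by
    rw [hswap, hMaindef, hErrdef, ← Finset.sum_add_distrib]
    refine Finset.sum_congr rfl fun q hq => ?_
    rw [← Finset.sum_add_distrib]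
    exact Finset.sum_congr rfl fun a ha => hsplitq q hq a ha
  -- main term evaluates exactly
  have hMain : Main = (ρ b h : ℂ) * S := by
    have hsub : h.divisors ⊆ Finset.Icc 1 Q := by
      intro q hq
      simp only [Nat.mem_divisors] at hq
      rw [Finset.mem_Icc]
      exact ⟨Nat.pos_of_dvd_of_pos hq.1 hh, le_trans (Nat.le_of_dvd hh hq.1) hhQ⟩
    have hvanish : ∀ q ∈ Finset.Icc 1 Q, q ∉ h.divisors →
        ∑ a ∈ (Finset.range q).filter (fun a => Nat.gcd a q = 1),
          G q a * ((∑ t ∈ T q, eChar q (-(a * t : ℤ))) * (S / ((h * q : ℕ) : ℂ))) = 0 := by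
      intro q hq hqd
      rw [Finset.mem_Icc] at hq
      have hqnd : ¬ q ∣ h := fun hd => hqd (Nat.mem_divisors.mpr ⟨hd, hh.ne'⟩)
      refine Finset.sum_eq_zero fun a ha => ?_
      rw [Finset.mem_filter] at ha
      rw [hchar q hq.1 a ha.2, if_neg hqnd, zero_mul, mul_zero]
    rw [hMaindef, ← Finset.sum_subset hsub hvanish]
    calc ∑ q ∈ h.divisors, ∑ a ∈ (Finset.range q).filter (fun a => Nat.gcd a q = 1),
          G q a * ((∑ t ∈ T q, eChar q (-(a * t : ℤ))) * (S / ((h * q : ℕ) : ℂ)))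
        = ∑ q ∈ h.divisors, ∑ a ∈ (Finset.range q).filter (fun a => Nat.gcd a q = 1),
            (S / (h : ℂ)) * ∑ c ∈ Finset.range q,
              (ρ c q : ℂ) * eChar q ((a : ℤ) * ((c : ℤ) - (b' : ℤ))) := by
          refine Finset.sum_congr rfl fun q hq => Finset.sum_congr rfl fun a ha => ?_
          simp only [Nat.mem_divisors] at hq
          rw [Finset.mem_filter] at ha
          have hq0 : 0 < q := Nat.pos_of_dvd_of_pos hq.1 hh
          have hh0 : (h : ℂ) ≠ 0 := Nat.cast_ne_zero.mpr hh.ne'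
          have hq0' : (q : ℂ) ≠ 0 := Nat.cast_ne_zero.mpr hq0.ne'
          rw [hchar q hq0 a ha.2, if_pos hq.1]
          have hfact : ((q : ℂ) * eChar q (-(a * b' : ℤ))) * (S / ((h * q : ℕ) : ℂ)) =
              (S / (h : ℂ)) * eChar q (-(a * b' : ℤ)) := by
            push_cast
            field_simp
          rw [hfact]
          show (∑ c ∈ Finset.range q, (ρ c q : ℂ) * eChar q ((a * c : ℤ))) *
              ((S / (h : ℂ)) * eChar q (-(a * b' : ℤ))) = _
          rw [Finset.sum_mul, Finset.mul_sum]
          refine Finset.sum_congr rfl fun c _ => ?_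
          have hee : eChar q ((a * c : ℤ)) * eChar q (-(a * b' : ℤ)) =
              eChar q ((a : ℤ) * ((c : ℤ) - (b' : ℤ))) := by
            rw [← eChar_add]
            congr 1
            push_cast
            ring
          rw [← hee]
          ring
      _ = (S / (h : ℂ)) * ((h : ℂ) * (ρ b' h : ℂ)) := by
          rw [Finset.sum_congr rfl (fun q _ => (Finset.mul_sum _ _ _).symm), ← Finset.mul_sum,
            rho_main_identity ρ hρper hρcomb h hh b']
      _ = (ρ b h : ℂ) * S := by
          have hh0 : (h : ℂ) ≠ 0 := Nat.cast_ne_zero.mpr hh.ne'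
          rw [hρper b' b h (by rw [hb'mod])]
          field_simp
  -- error term bound
  have hTwW : ∀ q : ℕ, 1 ≤ q → q ≤ Q → ∀ t : ℕ,
      ‖(Tw q t - S / ((h * q : ℕ) : ℂ))‖ ≤ W := by
    intro q h1 h2 t
    have hhq1 : 1 ≤ h * q := Nat.one_le_iff_ne_zero.mpr (Nat.mul_ne_zero hh.ne' (by omega))
    have hhq2 : h * q ≤ Q ^ 2 := by
      rw [pow_two]
      exact Nat.mul_le_mul hhQ h2
    exact hW (h * q) hhq1 hhq2 t
  have hErrBound : ‖Err‖ ≤ W * (Q : ℝ) ^ 3 := by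
    have inner2 : ∀ q ∈ Finset.Icc 1 Q, ∀ a ∈ (Finset.range q).filter (fun a => Nat.gcd a q = 1),
        ‖(G q a * (∑ t ∈ T q, eChar q (-(a * t : ℤ)) * (Tw q t - S / ((h * q : ℕ) : ℂ))))‖
          ≤ (q : ℝ) * W := by
      intro q hq a _
      rw [Finset.mem_Icc] at hq
      rw [norm_mul]
      have h1 : ‖(∑ t ∈ T q, eChar q (-(a * t : ℤ)) * (Tw q t - S / ((h * q : ℕ) : ℂ)))‖
          ≤ ((T q).card : ℝ) * W := by
        refine le_trans (norm_sum_le _ _) ?_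
        calc ∑ t ∈ T q, ‖(eChar q (-(a * t : ℤ)) * (Tw q t - S / ((h * q : ℕ) : ℂ)))‖
            ≤ ∑ _t ∈ T q, W := by
              refine Finset.sum_le_sum fun t _ => ?_
              rw [norm_mul, abs_eChar, one_mul]
              exact hTwW q hq.1 hq.2 t
          _ = ((T q).card : ℝ) * W := by rw [Finset.sum_const, nsmul_eq_mul]
      calc ‖(G q a)‖ * ‖(∑ t ∈ T q, eChar q (-(a * t : ℤ)) *
              (Tw q t - S / ((h * q : ℕ) : ℂ)))‖
          ≤ 1 * (((T q).card : ℝ) * W) :=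
            mul_le_mul (hGbound q hq.1 a) h1 (norm_nonneg _) zero_le_one
        _ = ((T q).card : ℝ) * W := one_mul _
        _ ≤ (q : ℝ) * W := by
            apply mul_le_mul_of_nonneg_right _ hW0
            exact_mod_cast hcardT q hq.1
    calc ‖Err‖
        ≤ ∑ q ∈ Finset.Icc 1 Q, ‖(∑ a ∈ (Finset.range q).filter
            (fun a => Nat.gcd a q = 1), G q a *
              (∑ t ∈ T q, eChar q (-(a * t : ℤ)) * (Tw q t - S / ((h * q : ℕ) : ℂ))))‖ := by
          rw [hErrdef]
          exact norm_sum_le _ _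
      _ ≤ ∑ q ∈ Finset.Icc 1 Q, ∑ a ∈ (Finset.range q).filter (fun a => Nat.gcd a q = 1),
            ‖(G q a * (∑ t ∈ T q, eChar q (-(a * t : ℤ)) *
              (Tw q t - S / ((h * q : ℕ) : ℂ))))‖ :=
          Finset.sum_le_sum fun q _ => norm_sum_le _ _
      _ ≤ ∑ q ∈ Finset.Icc 1 Q, ∑ _a ∈ (Finset.range q).filter (fun a => Nat.gcd a q = 1),
            (q : ℝ) * W :=
          Finset.sum_le_sum fun q hq => Finset.sum_le_sum (inner2 q hq)
      _ ≤ ∑ _q ∈ Finset.Icc 1 Q, (Q : ℝ) * ((Q : ℝ) * W) := by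
          refine Finset.sum_le_sum fun q hq => ?_
          rw [Finset.sum_const, nsmul_eq_mul]
          have hcard : (((Finset.range q).filter (fun a => Nat.gcd a q = 1)).card : ℝ) ≤ (q : ℝ) := by
            exact_mod_cast le_trans (Finset.card_filter_le _ _) (le_of_eq (Finset.card_range q))
          have hqQ : (q : ℝ) ≤ (Q : ℝ) := by
            exact_mod_cast (Finset.mem_Icc.mp hq).2
          calc (((Finset.range q).filter (fun a => Nat.gcd a q = 1)).card : ℝ) * ((q : ℝ) * W)
              ≤ (q : ℝ) * ((q : ℝ) * W) :=
                mul_le_mul_of_nonneg_right hcard (by positivity)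
            _ ≤ (Q : ℝ) * ((Q : ℝ) * W) := by
                apply mul_le_mul hqQ (mul_le_mul_of_nonneg_right hqQ hW0) (by positivity)
                  (Nat.cast_nonneg Q)
      _ = W * (Q : ℝ) ^ 3 := by
          rw [Finset.sum_const, Nat.card_Icc, nsmul_eq_mul]
          push_cast
          ring
  -- conclude
  have hk2 : ‖(∑ n ∈ F, khat n - (ρ b h : ℂ) * S)‖ ≤ W * (Q : ℝ) ^ 3 := by
    rw [hkhatF, hMain, show (ρ b h : ℂ) * S + Err - (ρ b h : ℂ) * S = Err by ring]
    exact hErrBound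
  have hk1 : ‖(∑ n ∈ F, k n - (ρ b h : ℂ) * S)‖ ≤ E := hE h hh1 hhQ b
  have final : ∑ n ∈ F, (k n - khat n) =
      (∑ n ∈ F, k n - (ρ b h : ℂ) * S) - (∑ n ∈ F, khat n - (ρ b h : ℂ) * S) := by
    rw [Finset.sum_sub_distrib]
    ring
  calc ‖(∑ n ∈ F, (k n - khat n))‖
      = ‖((∑ n ∈ F, k n - (ρ b h : ℂ) * S) -
          (∑ n ∈ F, khat n - (ρ b h : ℂ) * S))‖ := by rw [final]
    _ ≤ ‖(∑ n ∈ F, k n - (ρ b h : ℂ) * S)‖ +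
          ‖(∑ n ∈ F, khat n - (ρ b h : ℂ) * S)‖ := by
        exact norm_sub_le (∑ n ∈ F, k n - (ρ b h : ℂ) * S)
          (∑ n ∈ F, khat n - (ρ b h : ℂ) * S)
    _ ≤ E + W * (Q : ℝ) ^ 3 := add_le_add hk1 hk2
    _ = W * (Q : ℝ) ^ 3 + E := by ring
end

section
/- Let n be even, let L be a quadratic field contained in a number field K of degree n with ℚ-basis {ω₁,…,ω_n}, let {1, τ} be a ℤ-basis of 𝔬_L and δ ∈ L^×; write δ·N_{K/L}(u₁ω₁+⋯+u_nω_n) = 𝐍₁(u) + 𝐍₂(u)·τ for forms 𝐍₁, 𝐍₂ of degree n/2 with coefficients in ℚ. Then for every u ∈ ℂⁿ with 𝐍_{K/ℚ}(u) := N_{K/ℚ}(u₁ω₁+⋯+u_nω_n) ≠ 0, the gradients ∇𝐍₁(u) and ∇𝐍₂(u) are linearly independent over ℂ; i.e., the map u ↦ (𝐍₁(u), 𝐍₂(u)) from ℂⁿ to ℂ² is nonsingular at every point where 𝐍_{K/ℚ}(u) ≠ 0. -/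
open NumberField
open MvPolynomial

open MvPolynomial

lemma mv_zero_of_rat_eval {m : ℕ} (p : MvPolynomial (Fin m) ℂ)
    (h : ∀ x : Fin m → ℚ, eval (fun i => (x i : ℂ)) p = 0) : p = 0 := by
  induction m with
  | zero =>
    rw [MvPolynomial.eq_C_of_isEmpty p]
    have h0 := h (fun _ => 0)
    rw [MvPolynomial.eq_C_of_isEmpty p] at h0
    simp only [eval_C] at h0
    rw [h0, map_zero]
  | succ m ih =>
    set q := MvPolynomial.finSuccEquiv ℂ m p with hq
    have hq0 : q = 0 := by
      have hmap : ∀ x : Fin m → ℚ,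
          Polynomial.map (eval (fun i => (x i : ℂ))) q = 0 := by
        intro x
        apply Polynomial.eq_zero_of_infinite_isRoot
        apply Set.infinite_of_injective_forall_mem
          (f := fun a : ℚ => (a : ℂ))
          (fun a b hab => by simpa using hab)
        intro a
        show Polynomial.IsRoot _ _
        rw [Polynomial.IsRoot, ← MvPolynomial.eval_eq_eval_mv_eval']
        have := h (Fin.cons a x)
        have hfun : (Fin.cons ((a:ℂ)) (fun i => ((x i : ℚ) : ℂ)) : Fin (m+1) → ℂ)
            = fun i => (((Fin.cons a x : Fin (m+1) → ℚ) i : ℚ) : ℂ) := by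
          funext i
          refine Fin.cases ?_ (fun j => ?_) i <;> simp
        rw [hfun, this]
      apply Polynomial.ext
      intro k
      rw [Polynomial.coeff_zero]
      apply ih
      intro x
      have := congrArg (fun r => Polynomial.coeff r k) (hmap x)
      simpa [Polynomial.coeff_map] using this
    have := (MvPolynomial.finSuccEquiv ℂ m).injective (a₁ := p) (a₂ := 0)
    apply this
    simp [← hq, hq0]

lemma mv_eq_of_rat_eval {m : ℕ} (p q : MvPolynomial (Fin m) ℂ)
    (h : ∀ x : Fin m → ℚ, eval (fun i => (x i : ℂ)) p = eval (fun i => (x i : ℂ)) q) :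
    p = q := by
  have := mv_zero_of_rat_eval (p - q) (fun x => by simp [h x])
  exact sub_eq_zero.mp this

lemma pderiv_finset_prod {σ R ι : Type*} [CommRing R] [DecidableEq σ] [DecidableEq ι]
    (i : σ) (s : Finset ι) (f : ι → MvPolynomial σ R) :
    pderiv i (∏ a ∈ s, f a) = ∑ a ∈ s, (∏ b ∈ s.erase a, f b) * pderiv i (f a) := by
  induction s using Finset.induction_on with
  | empty => simp
  | @insert x s hxs ih =>
    have hsum : ∀ a ∈ s,
        (∏ b ∈ (insert x s).erase a, f b) * pderiv i (f a)
          = f x * ((∏ b ∈ s.erase a, f b) * pderiv i (f a)) := by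
      intro a ha
      rw [Finset.erase_insert_of_ne (by rintro rfl; exact hxs ha),
        Finset.prod_insert (fun hm => hxs (Finset.mem_of_mem_erase hm))]
      ring
    rw [Finset.prod_insert hxs, pderiv_mul, ih, Finset.sum_insert hxs,
      Finset.erase_insert hxs, Finset.sum_congr rfl hsum, ← Finset.mul_sum]
    ring


noncomputable def linForm {n : ℕ} {K : Type} [Field K] [CharZero K] (ω : Module.Basis (Fin n) ℚ K)
    (f : K →+* ℂ) : MvPolynomial (Fin n) ℂ :=
  ∑ i, MvPolynomial.C (f (ω i)) * MvPolynomial.X i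

lemma eval_linForm {n : ℕ} {K : Type} [Field K] [CharZero K] (ω : Module.Basis (Fin n) ℚ K)
    (f : K →+* ℂ) (x : Fin n → ℚ) :
    eval (fun i => (x i : ℂ)) (linForm ω f) = f (∑ i, x i • ω i) := by
  rw [map_sum f]
  simp only [linForm, map_sum, eval_mul, eval_C, eval_X]
  refine Finset.sum_congr rfl fun i _ => ?_
  rw [Algebra.smul_def, map_mul, eq_ratCast (algebraMap ℚ K), map_ratCast]
  ring

lemma pderiv_linForm {n : ℕ} {K : Type} [Field K] [CharZero K] (ω : Module.Basis (Fin n) ℚ K)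
    (f : K →+* ℂ) (i : Fin n) :
    pderiv i (linForm ω f) = MvPolynomial.C (f (ω i)) := by
  classical
  rw [linForm, map_sum]
  rw [Finset.sum_eq_single i (fun j _ hj => by
    rw [pderiv_C_mul, pderiv_X, Pi.single_eq_of_ne ?h, mul_zero]
    exact fun h => hj h) (by simp)]
  rw [pderiv_C_mul, pderiv_X, Pi.single_eq_same, mul_one]



/-- The nonsingularity claim of §5 of Browning–Heath-Brown: if `δ·𝐍_{K/L} = 𝐍₁ + 𝐍₂τ` over
the quadratic subfield `L` of a degree-`n` field `K`, then at every point `u ∈ ℂⁿ` with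
`𝐍_{K/ℚ}(u) ≠ 0` the gradients `∇𝐍₁(u)` and `∇𝐍₂(u)` are linearly independent over `ℂ`. -/
theorem norm_form_components_nonsingular
    (n : ℕ) (hn : 2 ≤ n) (hneven : Even n)
    (L : Type) [Field L] [NumberField L] (hL2 : Module.finrank ℚ L = 2)
    (τ : 𝓞 L) (bZ : Module.Basis (Fin 2) ℤ (𝓞 L)) (hb0 : bZ 0 = 1) (hb1 : bZ 1 = τ)
    (K : Type) [Field K] [NumberField K] [Algebra L K] [IsScalarTower ℚ L K]
    (hKn : Module.finrank ℚ K = n)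
    (ω : Module.Basis (Fin n) ℚ K)
    (δ : L) (hδ : δ ≠ 0)
    (N₁ N₂ NQ : MvPolynomial (Fin n) ℚ)
    (hN12 : ∀ x : Fin n → ℚ,
      δ * Algebra.norm L (∑ i, x i • ω i)
        = algebraMap ℚ L (MvPolynomial.eval x N₁)
          + (MvPolynomial.eval x N₂) • ((τ : 𝓞 L) : L))
    (hNQ : ∀ x : Fin n → ℚ,
      MvPolynomial.eval x NQ = Algebra.norm ℚ (∑ i, x i • ω i))
    (u : Fin n → ℂ) (hu : MvPolynomial.aeval u NQ ≠ (0 : ℂ)) :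
    LinearIndependent ℂ
      ![(fun i => MvPolynomial.aeval u (MvPolynomial.pderiv i N₁) : Fin n → ℂ),
        (fun i => MvPolynomial.aeval u (MvPolynomial.pderiv i N₂) : Fin n → ℂ)] := by
  classical
  haveI : FiniteDimensional L K := FiniteDimensional.right ℚ L K
  haveI : Algebra.IsSeparable L K := Algebra.isSeparable_tower_top_of_isSeparable ℚ L K
  letI : ∀ j : L →ₐ[ℚ] ℂ, haveI := j.toRingHom.toAlgebra; Fintype (K →ₐ[L] ℂ) :=
    fun _ => inferInstance
  -- per-fiber product formula at points of K
  have fiber : ∀ (j : L →ₐ[ℚ] ℂ) (z : K),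
      (haveI := j.toRingHom.toAlgebra; ∏ ψ : K →ₐ[L] ℂ, ψ z) = j (Algebra.norm L z) := by
    intro j z
    letI := j.toRingHom.toAlgebra
    have h := Algebra.norm_eq_prod_embeddings L ℂ (x := z)
    rw [RingHom.algebraMap_toAlgebra] at h
    exact h.symm
  -- eval of mapped polynomial
  have evmap : ∀ (N : MvPolynomial (Fin n) ℚ) (x : Fin n → ℚ),
      eval (fun i => (x i : ℂ)) (MvPolynomial.map (algebraMap ℚ ℂ) N)
        = algebraMap ℚ ℂ (MvPolynomial.eval x N) := by
    intro N x
    rw [eval_map]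
    have : MvPolynomial.eval x N = eval₂ (RingHom.id ℚ) x N := by
      rw [eval₂_id]
    rw [this, eval₂_comp_left (algebraMap ℚ ℂ) (RingHom.id ℚ) x N, RingHom.comp_id]
    have hfun : (fun i => ((x i : ℚ) : ℂ)) = (⇑(algebraMap ℚ ℂ) ∘ x) := by
      funext i
      simp [eq_ratCast (algebraMap ℚ ℂ)]
    rw [hfun]
  have haeval : ∀ p : MvPolynomial (Fin n) ℚ,
      MvPolynomial.aeval u p = eval u (MvPolynomial.map (algebraMap ℚ ℂ) p) := by
    intro p
    rw [MvPolynomial.aeval_def, ← eval_map]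
  -- per-fiber polynomial identity over ℂ
  have key : ∀ j : L →ₐ[ℚ] ℂ,
      MvPolynomial.C (j δ)
          * (haveI := j.toRingHom.toAlgebra; ∏ ψ : K →ₐ[L] ℂ, linForm ω ψ.toRingHom)
        = MvPolynomial.map (algebraMap ℚ ℂ) N₁
          + MvPolynomial.C (j ((τ : 𝓞 L) : L)) * MvPolynomial.map (algebraMap ℚ ℂ) N₂ := by
    intro j
    apply mv_eq_of_rat_eval
    intro x
    letI := j.toRingHom.toAlgebra
    rw [eval_mul, eval_C, eval_add, eval_mul, eval_C, evmap, evmap, map_prod]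
    have : ∀ ψ : K →ₐ[L] ℂ,
        eval (fun i => (x i : ℂ)) (linForm ω ψ.toRingHom) = ψ (∑ i, x i • ω i) := by
      intro ψ
      exact eval_linForm ω ψ.toRingHom x
    rw [Finset.prod_congr rfl (fun ψ _ => this ψ), fiber j, ← map_mul, hN12 x, map_add]
    congr 1
    · exact j.commutes _
    · rw [map_rat_smul j, Rat.smul_def, mul_comm, eq_ratCast (algebraMap ℚ ℂ)]
  -- whole norm form factors over ℂ
  have keyNQ : MvPolynomial.map (algebraMap ℚ ℂ) NQ
      = ∏ j : L →ₐ[ℚ] ℂ,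
          (haveI := j.toRingHom.toAlgebra; ∏ ψ : K →ₐ[L] ℂ, linForm ω ψ.toRingHom) := by
    apply mv_eq_of_rat_eval
    intro x
    rw [evmap, map_prod]
    have hz : ∀ j : L →ₐ[ℚ] ℂ,
        eval (fun i => (x i : ℂ))
            (haveI := j.toRingHom.toAlgebra; ∏ ψ : K →ₐ[L] ℂ, linForm ω ψ.toRingHom)
          = j (Algebra.norm L (∑ i, x i • ω i)) := by
      intro j
      letI := j.toRingHom.toAlgebra
      rw [map_prod, Finset.prod_congr rfl (fun ψ _ => eval_linForm ω ψ.toRingHom x)]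
      exact fiber j _
    rw [Finset.prod_congr rfl (fun j _ => hz j), hNQ x,
      ← Algebra.norm_norm (R := ℚ) (S := L) (a := ∑ i, x i • ω i)]
    exact Algebra.norm_eq_prod_embeddings ℚ ℂ (x := Algebra.norm L (∑ i, x i • ω i))
  -- nonvanishing of each linear form at u
  have hL0 : ∀ j : L →ₐ[ℚ] ℂ,
      (haveI := j.toRingHom.toAlgebra;
        ∀ ψ : K →ₐ[L] ℂ, eval u (linForm ω ψ.toRingHom) ≠ 0) := by
    have h := hu
    rw [haeval NQ, keyNQ, map_prod] at h
    intro j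
    letI := j.toRingHom.toAlgebra
    intro ψ hψ0
    apply h
    refine Finset.prod_eq_zero (Finset.mem_univ j) ?_
    rw [map_prod]
    exact Finset.prod_eq_zero (Finset.mem_univ ψ) hψ0
  -- gradient identity from key
  have grad : ∀ (j : L →ₐ[ℚ] ℂ) (i : Fin n),
      j δ * eval u (pderiv i
          (haveI := j.toRingHom.toAlgebra; ∏ ψ : K →ₐ[L] ℂ, linForm ω ψ.toRingHom))
        = MvPolynomial.aeval u (pderiv i N₁)
          + j ((τ : 𝓞 L) : L) * MvPolynomial.aeval u (pderiv i N₂) := by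
    intro j i
    have h := congrArg (fun P => eval u (pderiv i P)) (key j)
    simp only [pderiv_C_mul, map_add, eval_add, eval_mul, eval_C, pderiv_map] at h
    rw [haeval (pderiv i N₁), haeval (pderiv i N₂)]
    exact h
  -- gradient of fiber product expanded
  have gradP : ∀ (j : L →ₐ[ℚ] ℂ) (i : Fin n),
      eval u (pderiv i
          (haveI := j.toRingHom.toAlgebra; ∏ ψ : K →ₐ[L] ℂ, linForm ω ψ.toRingHom))
        = (haveI := j.toRingHom.toAlgebra;
            ∑ ψ : K →ₐ[L] ℂ,
              (∏ ψ' ∈ Finset.univ.erase ψ, eval u (linForm ω ψ'.toRingHom)) * ψ (ω i)) := by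
    intro j i
    letI := j.toRingHom.toAlgebra
    rw [pderiv_finset_prod, map_sum]
    refine Finset.sum_congr rfl fun ψ _ => ?_
    rw [eval_mul, pderiv_linForm, eval_C, map_prod]
    rfl
  -- the two embeddings of L
  have cardL : Fintype.card (L →ₐ[ℚ] ℂ) = 2 := by
    rw [AlgHom.card]; exact hL2
  let e2 : Fin 2 ≃ (L →ₐ[ℚ] ℂ) := (Fintype.equivFinOfCardEq cardL).symm
  set σ₁ := e2 0 with hσ₁
  set σ₂ := e2 1 with hσ₂
  have hσne : σ₁ ≠ σ₂ := fun h => by simpa using e2.injective h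
  have hagree : ∀ σ σ' : L →ₐ[ℚ] ℂ, σ ((τ : 𝓞 L) : L) = σ' ((τ : 𝓞 L) : L) → σ = σ' := by
    intro σ σ' h
    have hO : ∀ w : 𝓞 L, σ (algebraMap (𝓞 L) L w) = σ' (algebraMap (𝓞 L) L w) := by
      intro w
      have hw := bZ.sum_repr w
      have hcoe : algebraMap (𝓞 L) L w
          = (bZ.repr w 0 : ℤ) • (1 : L) + (bZ.repr w 1 : ℤ) • ((τ : 𝓞 L) : L) := by
        conv_lhs => rw [← hw]
        rw [Fin.sum_univ_two, hb0, hb1]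
        simp only [map_add, map_zsmul, map_one]
      rw [hcoe]
      simp only [map_add, map_zsmul, map_one, h]
    apply DFunLike.ext
    intro y
    obtain ⟨aa, bb, hbb, rfl⟩ := IsFractionRing.div_surjective (A := 𝓞 L) y
    rw [map_div₀, map_div₀, hO aa, hO bb]
  have hστ : σ₁ ((τ : 𝓞 L) : L) ≠ σ₂ ((τ : 𝓞 L) : L) := fun h => hσne (hagree _ _ h)
  have halljs : ∀ j : L →ₐ[ℚ] ℂ, j = σ₁ ∨ j = σ₂ := by
    intro j
    have hj : j = e2 (e2.symm j) := (e2.apply_symm_apply j).symm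
    obtain ⟨k, hk⟩ : ∃ k, e2.symm j = k := ⟨_, rfl⟩
    fin_cases k
    · left; rw [hj, hk]; rfl
    · right; rw [hj, hk]; rfl
  -- linear independence of the rows of the embeddings matrix
  have hmat : ∀ c : (K →ₐ[ℚ] ℂ) → ℂ,
      (∀ i, ∑ φ : K →ₐ[ℚ] ℂ, c φ * φ (ω i) = 0) → ∀ φ, c φ = 0 := by
    intro c hcs
    have hcard : Fintype.card (K →ₐ[ℚ] ℂ) = n := by rw [AlgHom.card]; exact hKn
    let eK : Fin n ≃ (K →ₐ[ℚ] ℂ) := (Fintype.equivFinOfCardEq hcard).symm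
    set M : Matrix (Fin n) (Fin n) ℂ := Algebra.embeddingsMatrixReindex ℚ ℂ (⇑ω) eK with hM
    have hdet : IsUnit M.det := by
      have hdisc : Algebra.discr ℚ (⇑ω) ≠ 0 := Algebra.discr_not_zero_of_basis ℚ ω
      have h2 := Algebra.discr_eq_det_embeddingsMatrixReindex_pow_two ℚ ℂ (⇑ω) eK
      rw [isUnit_iff_ne_zero]
      intro h0
      rw [← hM, h0] at h2
      apply hdisc
      apply (algebraMap ℚ ℂ).injective
      rw [h2, map_zero]
      ring
    haveI := M.invertibleOfIsUnitDet hdet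
    have hmul : M.mulVec (fun k => c (eK k)) = 0 := by
      funext i
      have hent : M.mulVec (fun k => c (eK k)) i = ∑ k, (eK k) (ω i) * c (eK k) := by
        simp [Matrix.mulVec, dotProduct, hM, Algebra.embeddingsMatrixReindex,
          Algebra.embeddingsMatrix]
      rw [hent]
      have h1 : ∑ k, (eK k) (ω i) * c (eK k) = ∑ φ : K →ₐ[ℚ] ℂ, φ (ω i) * c φ :=
        Fintype.sum_equiv eK _ _ (fun k => rfl)
      rw [h1, Pi.zero_apply, ← hcs i]
      exact Finset.sum_congr rfl fun φ _ => mul_comm _ _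
    have hzero : (fun k => c (eK k)) = 0 := by
      have h3 := congrArg (fun v => M⁻¹.mulVec v) hmul
      simpa [Matrix.mulVec_mulVec, Matrix.nonsing_inv_mul M hdet, Matrix.one_mulVec,
        Matrix.mulVec_zero] using h3
    intro φ
    have := congrFun hzero (eK.symm φ)
    simpa using this
  -- final computation
  rw [LinearIndependent.pair_iff]
  intro a b hab
  have hd : σ₂ ((τ : 𝓞 L) : L) - σ₁ ((τ : 𝓞 L) : L) ≠ 0 := sub_ne_zero.mpr (Ne.symm hστ)
  set t₁ := σ₁ ((τ : 𝓞 L) : L) with ht₁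
  set t₂ := σ₂ ((τ : 𝓞 L) : L) with ht₂
  set α := (a * t₂ - b) / (t₂ - t₁) with hα
  set β := (b - a * t₁) / (t₂ - t₁) with hβ
  have ha : a = α + β := by
    rw [hα, hβ]
    field_simp
    ring
  have hbb : b = α * t₁ + β * t₂ := by
    rw [hα, hβ]
    field_simp
    ring
  have hcomb : ∀ i : Fin n,
      α * (σ₁ δ * eval u (pderiv i
          (haveI := σ₁.toRingHom.toAlgebra; ∏ ψ : K →ₐ[L] ℂ, linForm ω ψ.toRingHom)))
        + β * (σ₂ δ * eval u (pderiv i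
          (haveI := σ₂.toRingHom.toAlgebra; ∏ ψ : K →ₐ[L] ℂ, linForm ω ψ.toRingHom))) = 0 := by
    intro i
    rw [grad σ₁ i, grad σ₂ i]
    have h0 := congrFun hab i
    simp only [Pi.add_apply, Pi.smul_apply, smul_eq_mul, Pi.zero_apply,
      Matrix.cons_val_zero, Matrix.cons_val_one, Matrix.head_cons] at h0
    rw [ha, hbb] at h0
    linear_combination h0
  -- pass to coefficients over all embeddings of K
  let eS := algHomEquivSigma (A := ℚ) (B := L) (C := K) (D := ℂ)
  let cf : (K →ₐ[ℚ] ℂ) → ℂ := fun φ =>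
    letI := (eS φ).1.toRingHom.toAlgebra
    (if (eS φ).1 = σ₁ then α * σ₁ δ else β * σ₂ δ)
      * ∏ ψ' ∈ Finset.univ.erase (eS φ).2, eval u (linForm ω ψ'.toRingHom)
  have hsum : ∀ i, ∑ φ : K →ₐ[ℚ] ℂ, cf φ * φ (ω i) = 0 := by
    intro i
    have hstep := Fintype.sum_equiv eS (fun φ => cf φ * φ (ω i))
      (fun s => letI := s.1.toRingHom.toAlgebra
        (if s.1 = σ₁ then α * σ₁ δ else β * σ₂ δ)
          * (∏ ψ' ∈ Finset.univ.erase s.2, eval u (linForm ω ψ'.toRingHom)) * s.2 (ω i))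
      (fun φ => rfl)
    rw [hstep, ← Finset.univ_sigma_univ, Finset.sum_sigma]
    have hfib : ∀ j : L →ₐ[ℚ] ℂ,
        (haveI := j.toRingHom.toAlgebra;
          ∑ ψ : K →ₐ[L] ℂ, (if j = σ₁ then α * σ₁ δ else β * σ₂ δ)
            * (∏ ψ' ∈ Finset.univ.erase ψ, eval u (linForm ω ψ'.toRingHom)) * ψ (ω i))
          = (if j = σ₁ then α * σ₁ δ else β * σ₂ δ)
              * eval u (pderiv i
                (haveI := j.toRingHom.toAlgebra;
                  ∏ ψ : K →ₐ[L] ℂ, linForm ω ψ.toRingHom)) := by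
      intro j
      letI := j.toRingHom.toAlgebra
      rw [gradP j i, Finset.mul_sum]
      exact Finset.sum_congr rfl fun ψ _ => by ring
    refine Eq.trans (Finset.sum_congr rfl (fun j _ => hfib j)) ?_
    have hsum2 := Fintype.sum_equiv e2
      (fun k => (if e2 k = σ₁ then α * σ₁ δ else β * σ₂ δ)
        * eval u (pderiv i
            (haveI := (e2 k).toRingHom.toAlgebra;
              ∏ ψ : K →ₐ[L] ℂ, linForm ω ψ.toRingHom)))
      (fun j => (if j = σ₁ then α * σ₁ δ else β * σ₂ δ)
        * eval u (pderiv i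
            (haveI := j.toRingHom.toAlgebra;
              ∏ ψ : K →ₐ[L] ℂ, linForm ω ψ.toRingHom)))
      (fun k => rfl)
    rw [← hsum2, Fin.sum_univ_two]
    beta_reduce
    rw [← hσ₁, ← hσ₂, if_pos rfl, if_neg (Ne.symm hσne)]
    linear_combination hcomb i
  have hc0 := hmat cf hsum
  -- each fiber is nonempty
  have hne : ∀ j : L →ₐ[ℚ] ℂ, (haveI := j.toRingHom.toAlgebra; Nonempty (K →ₐ[L] ℂ)) := by
    intro j
    letI := j.toRingHom.toAlgebra
    rw [← Fintype.card_pos_iff, AlgHom.card]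
    exact Module.finrank_pos
  have hprod : ∀ j : L →ₐ[ℚ] ℂ,
      (haveI := j.toRingHom.toAlgebra; ∀ ψ : K →ₐ[L] ℂ,
        (∏ ψ' ∈ Finset.univ.erase ψ, eval u (linForm ω ψ'.toRingHom)) ≠ 0) := by
    intro j
    letI := j.toRingHom.toAlgebra
    intro ψ
    exact Finset.prod_ne_zero_iff.mpr fun ψ' _ => hL0 j ψ'
  have hδj : ∀ j : L →ₐ[ℚ] ℂ, j δ ≠ 0 := by
    intro j h
    apply hδ
    apply RingHom.injective j.toRingHom
    rw [map_zero]
    exact h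
  obtain ⟨ψ₁⟩ := hne σ₁
  obtain ⟨ψ₂⟩ := hne σ₂
  have h1 : (letI := σ₁.toRingHom.toAlgebra;
      (α * σ₁ δ)
        * ∏ ψ' ∈ Finset.univ.erase ψ₁, eval u (linForm ω ψ'.toRingHom)) = 0 := by
    have hG := congrArg (fun (s : Σ f : L →ₐ[ℚ] ℂ, @AlgHom L K ℂ _ _ _ _ f.toRingHom.toAlgebra) => letI := s.1.toRingHom.toAlgebra
      (if s.1 = σ₁ then α * σ₁ δ else β * σ₂ δ)
        * ∏ ψ' ∈ Finset.univ.erase s.2, eval u (linForm ω ψ'.toRingHom))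
      (eS.apply_symm_apply ⟨σ₁, ψ₁⟩)
    have h := hG.symm.trans (hc0 (eS.symm ⟨σ₁, ψ₁⟩))
    simpa using h
  have h2 : (letI := σ₂.toRingHom.toAlgebra;
      (β * σ₂ δ)
        * ∏ ψ' ∈ Finset.univ.erase ψ₂, eval u (linForm ω ψ'.toRingHom)) = 0 := by
    have hG := congrArg (fun (s : Σ f : L →ₐ[ℚ] ℂ, @AlgHom L K ℂ _ _ _ _ f.toRingHom.toAlgebra) => letI := s.1.toRingHom.toAlgebra
      (if s.1 = σ₁ then α * σ₁ δ else β * σ₂ δ)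
        * ∏ ψ' ∈ Finset.univ.erase s.2, eval u (linForm ω ψ'.toRingHom))
      (eS.apply_symm_apply ⟨σ₂, ψ₂⟩)
    have h := hG.symm.trans (hc0 (eS.symm ⟨σ₂, ψ₂⟩))
    simpa [(Ne.symm hσne : σ₂ ≠ σ₁)] using h
  have hα0 : α = 0 := by
    rcases mul_eq_zero.mp h1 with h | h
    · rcases mul_eq_zero.mp h with h' | h'
      · exact h'
      · exact absurd h' (hδj σ₁)
    · exact absurd h (hprod σ₁ ψ₁)
  have hβ0 : β = 0 := by
    rcases mul_eq_zero.mp h2 with h | h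
    · rcases mul_eq_zero.mp h with h' | h'
      · exact h'
      · exact absurd h' (hδj σ₂)
    · exact absurd h (hprod σ₂ ψ₂)
  constructor
  · rw [ha, hα0, hβ0, add_zero]
  · rw [hbb, hα0, hβ0]
    ring
end

section
/- Let K be a number field of degree n with integral basis {ω₁,…,ω_n} of 𝔬_K, and let 𝐍_{K/ℚ}(s) := N_{K/ℚ}(s₁ω₁+⋯+s_nω_n). Then for every prime p and every integer σ ≥ 0, #{s ∈ ℕⁿ : 0 < s_j ≤ p^σ for all j, and p^σ divides 𝐍_{K/ℚ}(s)} ≤ (σ + 1)ⁿ · p^{(n−1)σ}. -/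
open NumberField UniqueFactorizationMonoid

section Aux

lemma nat_aux (σ e : ℕ) : σ * e + 1 ≤ (σ + 1) ^ e := by
  induction e with
  | zero => simp
  | succ e ih =>
    have h1 : 1 ≤ (σ + 1) ^ e := Nat.one_le_pow _ _ (by omega)
    calc σ * (e + 1) + 1 = (σ * e + 1) + σ * 1 := by ring
    _ ≤ (σ + 1) ^ e + σ * (σ + 1) ^ e := by gcongr
    _ = (σ + 1) ^ (e + 1) := by ring

lemma fact_sum (p : ℕ) (m : Multiset ℕ) (hm : (0 : ℕ) ∉ m) :
    m.prod.factorization p = (m.map (fun k => k.factorization p)).sum := by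
  induction m using Multiset.induction with
  | empty => simp
  | cons a s ih =>
    have ha : a ≠ 0 := fun h => hm (h ▸ Multiset.mem_cons_self a s)
    have hs : (0 : ℕ) ∉ s := fun h => hm (Multiset.mem_cons_of_mem h)
    have hsp : s.prod ≠ 0 := Multiset.prod_ne_zero hs
    rw [Multiset.prod_cons, Multiset.map_cons, Multiset.sum_cons, ← ih hs,
      Nat.factorization_mul ha hsp]
    simp

variable {K : Type} [Field K] [NumberField K]

-- factors of a sup
lemma nf_sup [DecidableEq (Ideal (𝓞 K))] (I J : Ideal (𝓞 K)) (hI : I ≠ ⊥) (hJ : J ≠ ⊥) :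
    normalizedFactors (I ⊔ J) = normalizedFactors I ∩ normalizedFactors J := by
  have hI0 : I ≠ 0 := hI
  have hJ0 : J ≠ 0 := hJ
  have hsup : I ⊔ J ≠ 0 := by
    intro h
    exact hI (by simpa using (sup_eq_bot_iff.mp (by simpa using h)).1)
  set m := normalizedFactors I ∩ normalizedFactors J with hm
  have hprime : ∀ q ∈ m, Prime q := fun q hq =>
    prime_of_normalized_factor q (Multiset.mem_inter.mp hq).1
  have hg0 : m.prod ≠ 0 := Multiset.prod_ne_zero (fun h0 => (hprime 0 h0).ne_zero rfl)
  have hnfg : normalizedFactors m.prod = m := normalizedFactors_prod_of_prime hprime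
  have hgI : m.prod ∣ I := (dvd_iff_normalizedFactors_le_normalizedFactors hg0 hI0).mpr
      (by rw [hnfg]; exact Multiset.inter_le_left)
  have hgJ : m.prod ∣ J := (dvd_iff_normalizedFactors_le_normalizedFactors hg0 hJ0).mpr
      (by rw [hnfg]; exact Multiset.inter_le_right)
  have hle1 : I ⊔ J ≤ m.prod := sup_le (Ideal.le_of_dvd hgI) (Ideal.le_of_dvd hgJ)
  have hdvd2 : (I ⊔ J) ∣ m.prod := by
    rw [dvd_iff_normalizedFactors_le_normalizedFactors hsup hg0, hnfg]
    exact Multiset.le_inter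
      ((dvd_iff_normalizedFactors_le_normalizedFactors hsup hI0).mp
        (Ideal.dvd_iff_le.mpr le_sup_left))
      ((dvd_iff_normalizedFactors_le_normalizedFactors hsup hJ0).mp
        (Ideal.dvd_iff_le.mpr le_sup_right))
  have heq : I ⊔ J = m.prod := le_antisymm hle1 (Ideal.le_of_dvd hdvd2)
  rw [heq, hnfg]

-- p-adic valuation of the norm as a sum over factors
lemma vp_absNorm (p : ℕ) (I : Ideal (𝓞 K)) (hI : I ≠ ⊥) :
    (Ideal.absNorm I).factorization p
      = ((normalizedFactors I).map (fun q => (Ideal.absNorm q).factorization p)).sum := by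
  classical
  have hI0 : I ≠ 0 := hI
  have hprod : ((normalizedFactors I).map Ideal.absNorm).prod = Ideal.absNorm I := by
    rw [← map_multiset_prod, associated_iff_eq.mp (prod_normalizedFactors hI0)]
  have h0 : (0 : ℕ) ∉ (normalizedFactors I).map Ideal.absNorm := by
    intro h
    obtain ⟨q, hq, hq0⟩ := Multiset.mem_map.mp h
    exact (prime_of_normalized_factor q hq).ne_zero (Ideal.absNorm_eq_zero_iff.mp hq0)
  rw [← hprod, fact_sum p _ h0, Multiset.map_map]
  rfl

lemma absNorm_natCast (r : ℕ) :
    Ideal.absNorm (Ideal.span {(r : 𝓞 K)}) = r ^ (Module.finrank ℤ (𝓞 K)) := by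
  let bb := Module.Free.chooseBasis ℤ (𝓞 K)
  have h1 : (r : 𝓞 K) = algebraMap ℤ (𝓞 K) (r : ℤ) := (map_natCast (algebraMap ℤ (𝓞 K)) r).symm
  rw [Ideal.absNorm_span_singleton, h1, Algebra.norm_algebraMap_of_basis bb,
    Module.finrank_eq_card_basis bb]
  simp [Int.natAbs_pow]

-- a prime ideal whose norm is divisible by p contains p
lemma mem_of_dvd_absNorm (p : ℕ) (hp : p.Prime) (q : Ideal (𝓞 K)) (hq : Prime q)
    (h : p ∣ Ideal.absNorm q) : (p : 𝓞 K) ∈ q := by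
  haveI hqp : q.IsPrime := Ideal.isPrime_of_prime hq
  have hqbot : q ≠ ⊥ := hq.ne_zero
  have hN0 : Ideal.absNorm q ≠ 0 := by
    rw [ne_eq, Ideal.absNorm_eq_zero_iff]; exact hqbot
  have key : ∀ m : ℕ, m ≠ 0 → (m : 𝓞 K) ∈ q → ∃ r : ℕ, r.Prime ∧ (r : 𝓞 K) ∈ q := by
    intro m
    induction m using Nat.strong_induction_on with
    | _ m ih =>
      intro hm0 hmq
      rcases eq_or_ne m 1 with rfl | hm1
      · exact absurd (q.eq_top_iff_one.mpr (by simpa using hmq)) hqp.ne_top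
      · have hf := Nat.minFac_prime hm1
        obtain ⟨t, ht⟩ := Nat.minFac_dvd m
        have hmem : ((m.minFac : 𝓞 K)) * (t : 𝓞 K) ∈ q := by
          rw [← Nat.cast_mul, ← ht]; exact hmq
        rcases hqp.mem_or_mem hmem with hmm | hmm
        · exact ⟨m.minFac, hf, hmm⟩
        · have ht0 : t ≠ 0 := by rintro rfl; exact hm0 (by simpa using ht)
          have htm : t < m := by
            rw [ht]
            have := hf.two_le
            calc t < 2 * t := by omega
            _ ≤ m.minFac * t := by
                have h2 : 2 ≤ m.minFac := hf.two_le
                exact Nat.mul_le_mul_right t h2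
          exact ih t htm ht0 hmm
  obtain ⟨r, hr, hrq⟩ := key _ hN0 (Ideal.absNorm_mem q)
  have h1 : Ideal.absNorm q ∣ r ^ (Module.finrank ℤ (𝓞 K)) := by
    rw [← absNorm_natCast (K := K) r]
    exact Ideal.absNorm_dvd_absNorm_of_le ((Ideal.span_singleton_le_iff_mem _).mpr hrq)
  obtain ⟨k, hk, hNq⟩ := (Nat.dvd_prime_pow hr).mp h1
  have hk0 : k ≠ 0 := by
    rintro rfl
    rw [pow_zero] at hNq
    exact hqp.ne_top (Ideal.absNorm_eq_one_iff.mp hNq)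
  have hpr : p = r := by
    have : p ∣ r ^ k := hNq ▸ h
    have := hp.dvd_of_dvd_pow this
    exact (Nat.prime_dvd_prime_iff_eq hp hr).mp this
  exact hpr ▸ hrq

end Aux

section Main

variable {K : Type} [Field K] [NumberField K] {n : ℕ}

lemma absNorm_p (b : Module.Basis (Fin n) ℤ (𝓞 K)) (p : ℕ) :
    Ideal.absNorm (Ideal.span {(p : 𝓞 K)}) = p ^ n := by
  rw [absNorm_natCast, Module.finrank_eq_card_basis b, Fintype.card_fin]

-- Lemma A
lemma lemA (b : Module.Basis (Fin n) ℤ (𝓞 K)) (p : ℕ) (hp : p.Prime) (σ : ℕ)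
    (x : 𝓞 K) (hx : x ≠ 0) (hd : p ^ σ ∣ Ideal.absNorm (Ideal.span {x})) :
    p ^ σ ∣ Ideal.absNorm (Ideal.span {x} ⊔ Ideal.span {(p : 𝓞 K)} ^ σ) := by
  classical
  set P : Ideal (𝓞 K) := Ideal.span {(p : 𝓞 K)} with hPdef
  set I : Ideal (𝓞 K) := Ideal.span {x} with hIdef
  have hpR : (p : 𝓞 K) ≠ 0 := Nat.cast_ne_zero.mpr hp.ne_zero
  have hPbot : P ≠ ⊥ := by simp [hPdef, Ideal.span_singleton_eq_bot, hpR]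
  have hJbot : P ^ σ ≠ (⊥ : Ideal (𝓞 K)) := pow_ne_zero _ hPbot
  have hI0 : I ≠ ⊥ := by simp [hIdef, Ideal.span_singleton_eq_bot, hx]
  have ha0 : I ⊔ P ^ σ ≠ ⊥ := by
    intro h
    exact hI0 (by simpa using (sup_eq_bot_iff.mp h).1)
  have hNI0 : Ideal.absNorm I ≠ 0 := by rw [ne_eq, Ideal.absNorm_eq_zero_iff]; exact hI0
  have hNa0 : Ideal.absNorm (I ⊔ P ^ σ) ≠ 0 := by
    rw [ne_eq, Ideal.absNorm_eq_zero_iff]; exact ha0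
  rw [hp.pow_dvd_iff_le_factorization hNa0]
  have hdσ : σ ≤ (Ideal.absNorm I).factorization p :=
    (hp.pow_dvd_iff_le_factorization hNI0).mp hd
  have hnfJ : normalizedFactors (P ^ σ) = σ • normalizedFactors P := normalizedFactors_pow σ
  rw [vp_absNorm p (I ⊔ P ^ σ) ha0, nf_sup I (P ^ σ) hI0 hJbot, hnfJ]
  set f' : Ideal (𝓞 K) → ℕ := fun q => (Ideal.absNorm q).factorization p with hf'
  by_cases hcase : ∃ q ∈ normalizedFactors P,
      σ * (normalizedFactors P).count q ≤ (normalizedFactors I).count q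
  · obtain ⟨q, hqP, hc⟩ := hcase
    have he1 : 1 ≤ (normalizedFactors P).count q := Multiset.count_pos.mpr hqP
    have hf1 : 1 ≤ f' q := by
      -- p divides the norm of q
      have hqdvd : Ideal.absNorm q ∣ p ^ n := by
        rw [← absNorm_p b p]
        exact Ideal.absNorm_dvd_absNorm_of_le
          (Ideal.le_of_dvd (dvd_of_mem_normalizedFactors hqP))
      obtain ⟨k, hk, hNq⟩ := (Nat.dvd_prime_pow hp).mp hqdvd
      have hk0 : k ≠ 0 := by
        rintro rfl
        rw [pow_zero] at hNq
        exact ((prime_of_normalized_factor q hqP).not_unit)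
          (Ideal.isUnit_iff.mpr (Ideal.absNorm_eq_one_iff.mp hNq))
      rw [hf']
      simp only [hNq, Nat.Prime.factorization_pow hp, Finsupp.single_eq_same]
      omega
    have hrep : Multiset.replicate σ q ≤ (normalizedFactors I) ∩ (σ • normalizedFactors P) := by
      rw [Multiset.le_iff_count]
      intro r
      by_cases hrq : r = q
      · subst hrq
        rw [Multiset.count_replicate_self, Multiset.count_inter, Multiset.count_nsmul]
        have : σ * 1 ≤ σ * (normalizedFactors P).count r := Nat.mul_le_mul_left σ he1
        omega
      · rw [Multiset.count_replicate, if_neg (fun h => hrq h.symm)]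
        exact Nat.zero_le _
    obtain ⟨u, hu⟩ := Multiset.le_iff_exists_add.mp (Multiset.map_le_map (f := f') hrep)
    rw [hu, Multiset.sum_add, Multiset.map_replicate, Multiset.sum_replicate, smul_eq_mul]
    have : σ * 1 ≤ σ * f' q := Nat.mul_le_mul_left σ hf1
    omega
  · push_neg at hcase
    have hinter : (normalizedFactors I) ∩ (σ • normalizedFactors P)
        = (normalizedFactors I).filter (· ∈ normalizedFactors P) := by
      ext r
      rw [Multiset.count_inter, Multiset.count_nsmul, Multiset.count_filter]
      by_cases hr : r ∈ normalizedFactors P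
      · have := hcase r hr
        simp only [hr, if_true]
        omega
      · have : (normalizedFactors P).count r = 0 := Multiset.count_eq_zero.mpr hr
        simp [hr, this]
    rw [hinter]
    have hsplit : ((normalizedFactors I).map f').sum
        = (((normalizedFactors I).filter (· ∈ normalizedFactors P)).map f').sum := by
      conv_lhs => rw [← Multiset.filter_add_not (· ∈ normalizedFactors P) (normalizedFactors I)]
      rw [Multiset.map_add, Multiset.sum_add]
      have hz : (((normalizedFactors I).filter (fun q => ¬ q ∈ normalizedFactors P)).map f').sum
          = 0 := by
        apply Multiset.sum_eq_zero
        intro y hy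
        obtain ⟨q, hq, rfl⟩ := Multiset.mem_map.mp hy
        obtain ⟨hqI, hqnP⟩ := Multiset.mem_filter.mp hq
        -- f' q = 0 for primes not above p
        by_contra hne
        have hpdvd : p ∣ Ideal.absNorm q := by
          by_contra hnd
          exact hne (Nat.factorization_eq_zero_of_not_dvd hnd)
        have hqprime : Prime q := prime_of_normalized_factor q hqI
        have hmem : (p : 𝓞 K) ∈ q := mem_of_dvd_absNorm p hp q hqprime hpdvd
        have hqdvdP : q ∣ P := Ideal.dvd_iff_le.mpr
          ((Ideal.span_singleton_le_iff_mem q).mpr hmem)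
        -- hence q is a normalized factor of P
        have : q ∈ normalizedFactors P := by
          have h1 : normalizedFactors q ≤ normalizedFactors P :=
            (dvd_iff_normalizedFactors_le_normalizedFactors hqprime.ne_zero hPbot).mp hqdvdP
          have h2 : normalizedFactors q = {q} := by
            rw [normalizedFactors_irreducible hqprime.irreducible, normalize_eq]
          rw [h2] at h1
          exact Multiset.singleton_le.mp h1
        exact hqnP this
      omega
    rw [← hsplit, ← vp_absNorm p I hI0]
    exact hdσ

-- Lemma (I): counting divisors
lemma countD (b : Module.Basis (Fin n) ℤ (𝓞 K)) (p : ℕ) (hp : p.Prime) (σ : ℕ) :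
    Nat.card {a : Ideal (𝓞 K) // Ideal.span {(p : 𝓞 K)} ^ σ ≤ a} ≤ (σ + 1) ^ n := by
  classical
  set P : Ideal (𝓞 K) := Ideal.span {(p : 𝓞 K)} with hPdef
  have hpR : (p : 𝓞 K) ≠ 0 := Nat.cast_ne_zero.mpr hp.ne_zero
  have hPbot : P ≠ ⊥ := by simp [hPdef, Ideal.span_singleton_eq_bot, hpR]
  have hJbot : P ^ σ ≠ (⊥ : Ideal (𝓞 K)) := pow_ne_zero _ hPbot
  have hnfJ : normalizedFactors (P ^ σ) = σ • normalizedFactors P := normalizedFactors_pow σ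
  set T := (normalizedFactors P).toFinset with hT
  set e : Ideal (𝓞 K) → ℕ := fun q => (normalizedFactors P).count q with he
  -- basic facts about elements of the subtype
  have habot : ∀ a : {a : Ideal (𝓞 K) // P ^ σ ≤ a}, (a : Ideal (𝓞 K)) ≠ 0 := by
    rintro ⟨a, ha⟩ rfl
    exact hJbot (le_bot_iff.mp ha)
  have hcount : ∀ a : {a : Ideal (𝓞 K) // P ^ σ ≤ a}, ∀ q,
      (normalizedFactors (a : Ideal (𝓞 K))).count q ≤ σ * e q := by
    intro a q
    have hdvd : (a : Ideal (𝓞 K)) ∣ P ^ σ := Ideal.dvd_iff_le.mpr a.2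
    have hle := (dvd_iff_normalizedFactors_le_normalizedFactors (habot a) hJbot).mp hdvd
    have := Multiset.le_iff_count.mp hle q
    rwa [hnfJ, Multiset.count_nsmul] at this
  -- the injection into a product of finite types
  have hinj : Function.Injective
      (fun a : {a : Ideal (𝓞 K) // P ^ σ ≤ a} =>
        (fun q : T => (⟨(normalizedFactors (a : Ideal (𝓞 K))).count (q : Ideal (𝓞 K)), by
          have := hcount a (q : Ideal (𝓞 K))
          omega⟩ : Fin (σ * e (q : Ideal (𝓞 K)) + 1)))) := by
    intro a a' h
    have hnf : normalizedFactors (a : Ideal (𝓞 K)) = normalizedFactors (a' : Ideal (𝓞 K)) := by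
      ext q
      by_cases hq : q ∈ T
      · have := congrFun h ⟨q, hq⟩
        simpa using congrArg Fin.val this
      · have hq0 : e q = 0 := by
          rw [he]
          simpa [hT, Multiset.count_eq_zero] using
            fun hmem => hq (Multiset.mem_toFinset.mpr hmem)
        have h1 := hcount a q
        have h2 := hcount a' q
        rw [hq0] at h1 h2
        omega
    refine Subtype.ext ?_
    calc (a : Ideal (𝓞 K))
        = (normalizedFactors (a : Ideal (𝓞 K))).prod :=
          (associated_iff_eq.mp (prod_normalizedFactors (habot a))).symm
      _ = (normalizedFactors (a' : Ideal (𝓞 K))).prod := by rw [hnf]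
      _ = (a' : Ideal (𝓞 K)) := associated_iff_eq.mp (prod_normalizedFactors (habot a'))
    -- turn the ideal equality into subtype equality
  -- cardinality bound
  have hcard := Nat.card_le_card_of_injective _ hinj
  refine hcard.trans ?_
  rw [Nat.card_eq_fintype_card, Fintype.card_pi]
  simp only [Fintype.card_fin]
  rw [Finset.prod_coe_sort T (fun q => σ * e q + 1)]
  calc (∏ q ∈ T, (σ * e q + 1))
      ≤ ∏ q ∈ T, (σ + 1) ^ (e q) := Finset.prod_le_prod (fun _ _ => Nat.zero_le _)
        (fun q _ => nat_aux σ (e q))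
    _ = (σ + 1) ^ (∑ q ∈ T, e q) := Finset.prod_pow_eq_pow_sum T _ _
    _ ≤ (σ + 1) ^ n := by
        apply Nat.pow_le_pow_right (by omega)
        have hsum : ∑ q ∈ T, e q = Multiset.card (normalizedFactors P) :=
          Multiset.toFinset_sum_count_eq _
        rw [hsum]
        -- the number of prime factors of P is at most n
        have hnorm : ∀ x ∈ (normalizedFactors P).map Ideal.absNorm, p ≤ x := by
          intro x hx
          obtain ⟨q, hq, rfl⟩ := Multiset.mem_map.mp hx
          have hqP : P ≤ q := Ideal.le_of_dvd (dvd_of_mem_normalizedFactors hq)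
          have hdvd : Ideal.absNorm q ∣ p ^ n := by
            rw [← absNorm_p b p]
            exact Ideal.absNorm_dvd_absNorm_of_le hqP
          obtain ⟨k, hk, hNq⟩ := (Nat.dvd_prime_pow hp).mp hdvd
          have hk0 : k ≠ 0 := by
            rintro rfl
            rw [pow_zero] at hNq
            have := Ideal.absNorm_eq_one_iff.mp hNq
            exact ((prime_of_normalized_factor q hq).not_unit) (Ideal.isUnit_iff.mpr this)
          rw [hNq]
          exact Nat.le_self_pow hk0 p
        have hprodle : p ^ (Multiset.card (normalizedFactors P))
            ≤ ((normalizedFactors P).map Ideal.absNorm).prod := by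
          have := Multiset.pow_card_le_prod hnorm
          rwa [Multiset.card_map] at this
        have hprodeq : ((normalizedFactors P).map Ideal.absNorm).prod = p ^ n := by
          rw [← map_multiset_prod, associated_iff_eq.mp (prod_normalizedFactors hPbot),
            absNorm_p b p]
        rw [hprodeq] at hprodle
        exact (Nat.pow_le_pow_iff_right hp.one_lt).mp hprodle

-- Lemma (II): fiber bound
set_option synthInstance.maxHeartbeats 1000000 in
set_option maxHeartbeats 1000000 in
lemma fibB (b : Module.Basis (Fin n) ℤ (𝓞 K)) (hn1 : 1 ≤ n) (p : ℕ) (hp : p.Prime) (σ : ℕ)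
    (a : Ideal (𝓞 K)) (hJa : Ideal.span {(p : 𝓞 K)} ^ σ ≤ a)
    (hNa : p ^ σ ≤ Ideal.absNorm a) :
    Nat.card (a.map (Ideal.Quotient.mk (Ideal.span {(p : 𝓞 K)} ^ σ))
        : Ideal ((𝓞 K) ⧸ Ideal.span {(p : 𝓞 K)} ^ σ)) ≤ p ^ ((n - 1) * σ) := by
  classical
  set J : Ideal (𝓞 K) := Ideal.span {(p : 𝓞 K)} ^ σ with hJdef
  set A : Ideal ((𝓞 K) ⧸ J) := a.map (Ideal.Quotient.mk J) with hA
  have hNJ : Ideal.absNorm J = p ^ (n * σ) := by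
    rw [hJdef, map_pow, absNorm_p b, ← pow_mul]
  have h1 : Nat.card ((𝓞 K) ⧸ J) = Nat.card A * Nat.card (((𝓞 K) ⧸ J) ⧸ A) :=
    Submodule.card_eq_card_quotient_mul_card A
  have h2 : Nat.card (((𝓞 K) ⧸ J) ⧸ A) = Ideal.absNorm a := by
    rw [Ideal.absNorm_apply, Submodule.cardQuot_apply]
    exact Nat.card_congr (DoubleQuot.quotQuotEquivQuotOfLE hJa).toEquiv
  have h3 : Nat.card ((𝓞 K) ⧸ J) = p ^ (n * σ) := by
    rw [← Submodule.cardQuot_apply, ← Ideal.absNorm_apply, hNJ]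
  have hkey : Nat.card A * p ^ σ ≤ p ^ ((n - 1) * σ) * p ^ σ := by
    calc Nat.card A * p ^ σ ≤ Nat.card A * Ideal.absNorm a := by
          exact Nat.mul_le_mul_left _ hNa
      _ = Nat.card ((𝓞 K) ⧸ J) := by rw [h1, h2]
      _ = p ^ ((n - 1) * σ) * p ^ σ := by
          rw [h3, ← pow_add]
          congr 1
          have : n - 1 + 1 = n := by omega
          calc n * σ = (n - 1 + 1) * σ := by rw [this]
            _ = (n - 1) * σ + σ := by ring
  exact Nat.le_of_mul_le_mul_right hkey (Nat.pow_pos hp.pos)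

end Main

set_option maxHeartbeats 2000000 in
set_option synthInstance.maxHeartbeats 1000000 in
/-- The counting estimate of §9 of Browning–Heath-Brown (used for `T₂(p^t)`): for a number
field `K` of degree `n` with integral basis `{ω₁,…,ω_n}`, a prime `p` and `σ ≥ 0`, the number
of `s ∈ ℕⁿ` with `0 < s_j ≤ p^σ` and `p^σ ∣ 𝐍_{K/ℚ}(s)` is at most `(σ+1)ⁿ·p^{(n−1)σ}`. -/
theorem norm_form_divisibility_count
    (K : Type) [Field K] [NumberField K]
    (n : ℕ) (hn : Module.finrank ℚ K = n)
    (b : Module.Basis (Fin n) ℤ (𝓞 K))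
    (p : ℕ) (hp : p.Prime) (σ : ℕ) :
    Nat.card {s : Fin n → ℕ //
        (∀ j, 0 < s j ∧ s j ≤ p ^ σ)
        ∧ (p : ℤ) ^ σ ∣ Algebra.norm ℤ (∑ i, (s i : ℤ) • b i)}
      ≤ (σ + 1) ^ n * p ^ ((n - 1) * σ) := by
  classical
  have hn1 : 1 ≤ n := hn ▸ Module.finrank_pos
  set R := 𝓞 K
  set P : Ideal R := Ideal.span {(p : R)} with hP
  set J : Ideal R := P ^ σ with hJdef
  have hpR : (p : R) ≠ 0 := Nat.cast_ne_zero.mpr hp.ne_zero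
  have hPbot : P ≠ ⊥ := by
    simp [hP, Ideal.span_singleton_eq_bot, hpR]
  have hJbot : J ≠ ⊥ := pow_ne_zero _ hPbot
  have hNJ : Ideal.absNorm J = p ^ (n * σ) := by
    rw [hJdef, map_pow, absNorm_p b, ← pow_mul]
  -- the target quotient is finite
  have hfinQ : Finite (R ⧸ J) := by
    rw [← Ideal.absNorm_ne_zero_iff]
    simp [hNJ, hp.ne_zero]
  -- the sigma type
  set D := {a : Ideal R // J ≤ a ∧ p ^ σ ≤ Ideal.absNorm a} with hD
  haveI hfs : Finite {a : Ideal R // J ≤ a} := by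
    refine Finite.of_injective (β := Set (R ⧸ J))
      (fun a => ((Ideal.Quotient.mk J) '' ((a : Ideal R) : Set R) : Set (R ⧸ J))) ?_
    intro a a' h
    have key : ∀ c : {a : Ideal R // J ≤ a}, ∀ z : R,
        z ∈ c.1 ↔ (Ideal.Quotient.mk J) z ∈ (Ideal.Quotient.mk J) '' ((c : Ideal R) : Set R) := by
      intro c z
      constructor
      · exact fun hz => ⟨z, hz, rfl⟩
      · rintro ⟨w, hw, hwz⟩
        have hzw : z - w ∈ J := Ideal.Quotient.eq.mp hwz.symm
        have := c.2 hzw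
        simpa using add_mem this hw
    ext x
    rw [key a x, key a' x]
    simp only at h
    rw [h]
  have hDfin : Finite D :=
    Finite.of_injective (fun a : D => (⟨a.1, a.2.1⟩ : {a : Ideal R // J ≤ a}))
      (fun a a' h => Subtype.ext (by simpa using h))
  set Fib : D → Type := fun a => {y : R ⧸ J // y ∈ a.1.map (Ideal.Quotient.mk J)} with hFib
  have hFibFin : ∀ a : D, Finite (Fib a) := fun a => Subtype.finite
  -- the injection
  set S := {s : Fin n → ℕ //
        (∀ j, 0 < s j ∧ s j ≤ p ^ σ)
        ∧ (p : ℤ) ^ σ ∣ Algebra.norm ℤ (∑ i, (s i : ℤ) • b i)} with hS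
  have main : ∃ F : S → Σ a : D, Fib a, Function.Injective F := by
    have hxne : ∀ s : S, (∑ i, ((s.1 i : ℤ)) • b i) ≠ 0 := by
      intro s hzero
      have hrepr := Module.Basis.repr_sum_self b (fun i => ((s.1 i : ℕ) : ℤ))
      rw [hzero] at hrepr
      have := congrFun hrepr ⟨0, hn1⟩
      simp only [map_zero, Finsupp.coe_zero, Pi.zero_apply] at this
      have h0 := (s.2.1 ⟨0, hn1⟩).1
      omega
    have hdvd : ∀ s : S, p ^ σ ∣ Ideal.absNorm (Ideal.span {∑ i, ((s.1 i : ℤ)) • b i}) := by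
      intro s
      rw [Ideal.absNorm_span_singleton]
      have h1 := Int.natAbs_dvd_natAbs.mpr s.2.2
      simpa [Int.natAbs_pow] using h1
    have hcond : ∀ s : S, J ≤ Ideal.span {∑ i, ((s.1 i : ℤ)) • b i} ⊔ J
        ∧ p ^ σ ≤ Ideal.absNorm (Ideal.span {∑ i, ((s.1 i : ℤ)) • b i} ⊔ J) := by
      intro s
      refine ⟨le_sup_right, ?_⟩
      have hA := lemA b p hp σ _ (hxne s) (hdvd s)
      have hane : Ideal.span {∑ i, ((s.1 i : ℤ)) • b i} ⊔ J ≠ ⊥ := by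
        intro h
        exact hJbot (by simpa using (sup_eq_bot_iff.mp h).2)
      have : Ideal.absNorm (Ideal.span {∑ i, ((s.1 i : ℤ)) • b i} ⊔ J) ≠ 0 := by
        rw [ne_eq, Ideal.absNorm_eq_zero_iff]; exact hane
      exact Nat.le_of_dvd (Nat.pos_of_ne_zero this) hA
    refine ⟨fun s => ⟨⟨Ideal.span {∑ i, ((s.1 i : ℤ)) • b i} ⊔ J, hcond s⟩,
      ⟨Ideal.Quotient.mk J (∑ i, ((s.1 i : ℤ)) • b i),
        Ideal.mem_map_of_mem _ (Ideal.mem_sup_left (Ideal.mem_span_singleton_self _))⟩⟩, ?_⟩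
    intro s s' h
    have h2 : Ideal.Quotient.mk J (∑ i, ((s.1 i : ℤ)) • b i)
        = Ideal.Quotient.mk J (∑ i, ((s'.1 i : ℤ)) • b i) :=
      congrArg (fun t : Σ a : D, Fib a => (t.2 : {y : R ⧸ J // y ∈ t.1.1.map
        (Ideal.Quotient.mk J)}).1) h
    have h3 : (∑ i, ((s.1 i : ℤ)) • b i) - (∑ i, ((s'.1 i : ℤ)) • b i) ∈ J :=
      Ideal.Quotient.eq.mp h2
    rw [hJdef, hP, Ideal.span_singleton_pow, Ideal.mem_span_singleton] at h3
    obtain ⟨y, hy⟩ := h3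
    have hy' : (∑ i, ((s.1 i : ℤ)) • b i) - (∑ i, ((s'.1 i : ℤ)) • b i) = ((p : ℤ) ^ σ) • y := by
      rw [hy, zsmul_eq_mul]
      congr 1
      push_cast
      ring
    apply Subtype.ext
    funext i
    have hcoord : ((s.1 i : ℕ) : ℤ) - ((s'.1 i : ℕ) : ℤ) = (p : ℤ) ^ σ * (b.repr y i) := by
      have := congrArg (fun z => (b.repr z : Fin n →₀ ℤ) i) hy'
      simp only [map_sub, map_smul, Finsupp.coe_sub, Finsupp.coe_smul, Pi.sub_apply,
        Pi.smul_apply, smul_eq_mul] at this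
      rwa [Module.Basis.repr_sum_self, Module.Basis.repr_sum_self] at this
    have hdvd2 : (p : ℤ) ^ σ ∣ ((s.1 i : ℕ) : ℤ) - ((s'.1 i : ℕ) : ℤ) := ⟨_, hcoord⟩
    have hb1 := s.2.1 i
    have hb2 := s'.2.1 i
    have hcast1 : ((s.1 i : ℕ) : ℤ) ≤ (p : ℤ) ^ σ := by exact_mod_cast hb1.2
    have hcast2 : ((s'.1 i : ℕ) : ℤ) ≤ (p : ℤ) ^ σ := by exact_mod_cast hb2.2
    have hcast3 : (0 : ℤ) < ((s.1 i : ℕ) : ℤ) := by exact_mod_cast hb1.1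
    have hcast4 : (0 : ℤ) < ((s'.1 i : ℕ) : ℤ) := by exact_mod_cast hb2.1
    have habs : |((s.1 i : ℕ) : ℤ) - ((s'.1 i : ℕ) : ℤ)| < (p : ℤ) ^ σ := by
      rw [abs_lt]
      constructor <;> linarith
    have hzero := Int.eq_zero_of_abs_lt_dvd hdvd2 habs
    have : ((s.1 i : ℕ) : ℤ) = ((s'.1 i : ℕ) : ℤ) := by linarith [sub_eq_zero.mp hzero]
    exact_mod_cast this
  obtain ⟨F, hF⟩ := main
  haveI : Finite (Σ a : D, Fib a) := by
    haveI := hFibFin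
    exact Finite.instSigma
  calc Nat.card S ≤ Nat.card (Σ a : D, Fib a) := Nat.card_le_card_of_injective F hF
  _ ≤ (σ + 1) ^ n * p ^ ((n - 1) * σ) := by
      haveI := hFibFin
      haveI : Fintype D := Fintype.ofFinite D
      haveI : ∀ a : D, Fintype (Fib a) := fun a => Fintype.ofFinite _
      rw [Nat.card_eq_fintype_card, Fintype.card_sigma]
      have hbound : ∀ a : D, Fintype.card (Fib a) ≤ p ^ ((n - 1) * σ) := by
        intro a
        rw [← Nat.card_eq_fintype_card]
        exact fibB b hn1 p hp σ a.1 a.2.1 a.2.2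
      calc ∑ a : D, Fintype.card (Fib a) ≤ ∑ _a : D, p ^ ((n - 1) * σ) :=
            Finset.sum_le_sum (fun a _ => hbound a)
        _ = Fintype.card D * p ^ ((n - 1) * σ) := by
            rw [Finset.sum_const, Finset.card_univ, smul_eq_mul]
        _ ≤ (σ + 1) ^ n * p ^ ((n - 1) * σ) := by
            gcongr
            have : Nat.card D ≤ Nat.card {a : Ideal R // J ≤ a} :=
              Nat.card_le_card_of_injective
                (fun a : D => (⟨a.1, a.2.1⟩ : {a : Ideal R // J ≤ a}))
                (fun a a' h => Subtype.ext (by simpa using h))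
            rw [← Nat.card_eq_fintype_card]
            exact this.trans (countD b p hp σ)
end

section
/- Let n ≥ 4 be even, let L be a quadratic field with ℤ-basis {1, τ} of 𝔬_L, contained in a number field K of degree n with integral basis {ω₁,…,ω_n} of 𝔬_K satisfying ω₁ = 1. Write 𝐍_{K/L}(v) := N_{K/L}(v₁ω₁+⋯+v_nω_n) ∈ 𝔬_L for v ∈ ℤⁿ, and for k ∈ ℕ define R(k) := #{v ∈ ℕⁿ : 0 < v_j ≤ k for all j, and k divides 𝐍_{K/L}(v) in 𝔬_L}. Then for every ξ > 0 one has R(k) ≪_ξ k^{n−2+ξ} for all k ≥ 1 (implied constant depending only on ξ and K), and R(k) < kⁿ for every k > 1. -/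
open NumberField UniqueFactorizationMonoid


section Helpers

variable {R : Type*} [CommRing R] [IsDedekindDomain R]

theorem pow_dvd_iff_le_count [DecidableEq (Ideal R)] {P I : Ideal R} (hP : Prime P) (hI : I ≠ ⊥)
    {m : ℕ} : P ^ m ∣ I ↔ m ≤ (normalizedFactors I).count P := by
  constructor
  · intro h
    have h2 := (dvd_iff_normalizedFactors_le_normalizedFactors (pow_ne_zero _ hP.ne_zero) hI).1 h
    have h3 : normalizedFactors (P ^ m) = Multiset.replicate m P := by
      rw [normalizedFactors_pow, normalizedFactors_irreducible hP.irreducible, normalize_eq,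
        Multiset.nsmul_singleton]
    rw [h3] at h2
    simpa using Multiset.le_iff_count.1 h2 P
  · intro h
    have h1 : Multiset.replicate m P ≤ normalizedFactors I := by
      rw [Multiset.le_iff_count]
      intro a
      by_cases ha : a = P
      · simpa [ha] using h
      · rw [Multiset.count_replicate, if_neg (fun h' : P = a => ha h'.symm)]
        exact Nat.zero_le _
    have h2 := Multiset.prod_dvd_prod_of_le h1
    rwa [Multiset.prod_replicate, prod_normalizedFactors_eq_self hI] at h2

theorem factorization_multiset_prod (p : ℕ) (s : Multiset ℕ) (h : ∀ x ∈ s, x ≠ 0) :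
    s.prod.factorization p = (s.map (fun x => x.factorization p)).sum := by
  induction s using Multiset.induction_on with
  | empty => simp
  | cons a s ih =>
    have ha : a ≠ 0 := h a (Multiset.mem_cons_self a s)
    have hs : s.prod ≠ 0 := Multiset.prod_ne_zero (fun h0 => h 0 (Multiset.mem_cons_of_mem h0) rfl)
    rw [Multiset.prod_cons, Nat.factorization_mul ha hs, Multiset.map_cons, Multiset.sum_cons]
    simp only [Finsupp.coe_add, Pi.add_apply]
    rw [ih (fun x hx => h x (Multiset.mem_cons_of_mem hx))]

end Helpers

section AbsNormHelpers

variable {S : Type*} [CommRing S] [IsDedekindDomain S] [Nontrivial S]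
  [Module.Free ℤ S] [Module.Finite ℤ S]

theorem absNorm_factorization (p : ℕ) {I : Ideal S} (hI : I ≠ ⊥) :
    (Ideal.absNorm I).factorization p
      = ((normalizedFactors I).map (fun P => (Ideal.absNorm P).factorization p)).sum := by
  conv_lhs => rw [← prod_normalizedFactors_eq_self hI]
  rw [map_multiset_prod]
  rw [factorization_multiset_prod]
  · rw [Multiset.map_map]; rfl
  · intro x hx
    obtain ⟨P, hP, rfl⟩ := Multiset.mem_map.1 hx
    rw [Ne, Ideal.absNorm_eq_zero_iff]
    exact (prime_of_normalized_factor P hP).ne_zero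

theorem prime_dvd_absNorm_iff {P : Ideal S} (hP : Prime P) {p : ℕ} (hp : p.Prime) :
    p ∣ Ideal.absNorm P ↔ (p : S) ∈ P := by
  haveI hPP : P.IsPrime := Ideal.isPrime_of_prime hP
  haveI hPM : P.IsMaximal := Ideal.IsPrime.isMaximal hPP hP.ne_zero
  letI : Field (S ⧸ P) := Ideal.Quotient.field P
  have hfin : Finite (S ⧸ P) := by
    apply Nat.finite_of_card_ne_zero
    have : Ideal.absNorm P ≠ 0 := by
      rw [Ne, Ideal.absNorm_eq_zero_iff]; exact hP.ne_zero
    exact this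
  letI : Fintype (S ⧸ P) := Fintype.ofFinite _
  set q := ringChar (S ⧸ P) with hq
  haveI : CharP (S ⧸ P) q := ringChar.charP _
  have hqprime : q.Prime := CharP.char_is_prime (S ⧸ P) q
  obtain ⟨m, hm⟩ := FiniteField.card (S ⧸ P) q
  have hcard : Ideal.absNorm P = q ^ (m : ℕ) := by
    rw [Ideal.absNorm_apply, Submodule.cardQuot_apply, Nat.card_eq_fintype_card, hm.2]
  constructor
  · intro hdvd
    rw [hcard] at hdvd
    have : p = q := (Nat.prime_dvd_prime_iff_eq hp hqprime).1 (hp.dvd_of_dvd_pow hdvd)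
    rw [← Ideal.Quotient.eq_zero_iff_mem, map_natCast, this]
    exact CharP.cast_eq_zero (S ⧸ P) q
  · intro hmem
    have h0 : ((p : ℕ) : S ⧸ P) = 0 := by
      rw [← map_natCast (Ideal.Quotient.mk P), Ideal.Quotient.eq_zero_iff_mem]
      exact hmem
    have hqp : q ∣ p := (CharP.cast_eq_zero_iff (S ⧸ P) q p).1 h0
    have : q = p := ((Nat.prime_dvd_prime_iff_eq hqprime hp).1 hqp)
    rw [hcard, ← this]
    exact dvd_pow_self q m.pos.ne'

end AbsNormHelpers

section NormCongruence

theorem prod_add_mul_sub_prod_mem {A : Type*} [CommRing A] {ι : Type*} (s : Finset ι)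
    (f g : ι → A) (k : A) :
    (∏ i ∈ s, (f i + k * g i)) - ∏ i ∈ s, f i ∈ Ideal.span {k} := by
  rw [← Ideal.Quotient.eq_zero_iff_mem, map_sub, map_prod, map_prod, sub_eq_zero]
  refine Finset.prod_congr rfl (fun i _ => ?_)
  have hk : (Ideal.Quotient.mk (Ideal.span {k})) k = 0 := by
    rw [Ideal.Quotient.eq_zero_iff_mem]
    exact Ideal.mem_span_singleton_self k
  rw [map_add, map_mul, hk, zero_mul, add_zero]

variable (F K : Type) [Field F] [NumberField F] [Field K] [NumberField K]
  [Algebra F K] [IsScalarTower ℚ F K]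

theorem exists_norm_add_eq (k : ℕ) (hk : 0 < k) (x y : 𝓞 K) :
    ∃ z : 𝓞 F, Algebra.norm F ((x : K) + (k : K) * (y : K))
      = Algebra.norm F (x : K) + (k : F) * (z : F) := by
  haveI : FiniteDimensional F K := FiniteDimensional.right ℚ F K
  classical
  set Ω := AlgebraicClosure F
  set R' := integralClosure ℤ Ω
  have hint : ∀ (σ : K →ₐ[F] Ω) (w : 𝓞 K), IsIntegral ℤ (σ (w : K)) := fun σ w =>
    (IsIntegral.map σ.toRingHom.toIntAlgHom w.isIntegral_coe)
  set g : (K →ₐ[F] Ω) → R' := fun σ => ⟨σ (x : K), hint σ x⟩ with hg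
  set h : (K →ₐ[F] Ω) → R' := fun σ => ⟨σ (y : K), hint σ y⟩ with hh
  have hmem := prod_add_mul_sub_prod_mem (Finset.univ : Finset (K →ₐ[F] Ω)) g h (k : R')
  rw [Ideal.mem_span_singleton] at hmem
  obtain ⟨r, hr⟩ := hmem
  -- push the identity down to Ω
  have hΩ : (∏ σ : K →ₐ[F] Ω, (σ (x : K) + (k : Ω) * σ (y : K)))
      - ∏ σ : K →ₐ[F] Ω, σ (x : K) = (k : Ω) * (r : Ω) := by
    have := congrArg (algebraMap R' Ω) hr
    push_cast at this
    convert this using 2 <;> rfl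
  have hnx := Algebra.norm_eq_prod_embeddings F Ω ((x : K))
  have hnxy := Algebra.norm_eq_prod_embeddings F Ω ((x : K) + (k : K) * (y : K))
  have hσ : ∀ σ : K →ₐ[F] Ω, σ ((x : K) + (k : K) * (y : K))
      = σ (x : K) + (k : Ω) * σ (y : K) := by
    intro σ
    rw [map_add, map_mul, map_natCast]
  rw [Finset.prod_congr rfl (fun σ _ => hσ σ)] at hnxy
  set δ : F := Algebra.norm F ((x : K) + (k : K) * (y : K)) - Algebra.norm F (x : K) with hδ
  have hδΩ : algebraMap F Ω δ = (k : Ω) * (r : Ω) := by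
    rw [hδ, map_sub, hnx, hnxy, hΩ]
  have hkF : ((k : F)) ≠ 0 := Nat.cast_ne_zero.2 hk.ne'
  set z₀ : F := δ / (k : F) with hz₀
  have hz₀Ω : algebraMap F Ω z₀ = (r : Ω) := by
    rw [hz₀, map_div₀, hδΩ, map_natCast]
    exact mul_div_cancel_left₀ _ (Nat.cast_ne_zero.2 hk.ne')
  have hz₀int : IsIntegral ℤ z₀ := by
    have : IsIntegral ℤ (algebraMap F Ω z₀) := hz₀Ω ▸ r.2
    exact (isIntegral_algebraMap_iff (algebraMap F Ω).injective).1 this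
  refine ⟨⟨z₀, hz₀int⟩, ?_⟩
  have : δ = (k : F) * z₀ := by
    rw [hz₀, mul_div_cancel₀ _ hkF]
  rw [hδ] at this
  show (Algebra.norm F) ((x : K) + (k : K) * (y : K)) = (Algebra.norm F) (x : K) + (k : F) * z₀
  linear_combination this

end NormCongruence

section NormSq

variable (L K : Type) [Field L] [NumberField L] [Field K] [NumberField K]
  [Algebra L K] [IsScalarTower ℚ L K]

theorem norm_int_sq_dvd (hL2 : Module.finrank ℚ L = 2) (k : ℕ) (β : 𝓞 K)
    (h : ∃ z : 𝓞 L, Algebra.norm L (β : K) = (k : L) * (z : L)) :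
    ((k : ℤ)) ^ 2 ∣ Algebra.norm ℤ β := by
  obtain ⟨z, hz⟩ := h
  have h1 : Algebra.norm ℚ ((β : K)) = Algebra.norm ℚ ((k : L) * (z : L)) := by
    rw [← Algebra.norm_norm (R := ℚ) (S := L) (a := (β : K)), hz]
  have h2 : Algebra.norm ℚ ((k : L)) = ((k : ℚ)) ^ 2 := by
    have : ((k : L)) = algebraMap ℚ L ((k : ℚ)) := by push_cast; rfl
    rw [this, Algebra.norm_algebraMap, hL2]
  have h3 : (Algebra.norm ℤ β : ℚ) = ((k : ℚ)) ^ 2 * (Algebra.norm ℤ z : ℚ) := by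
    rw [Algebra.coe_norm_int, h1, map_mul, h2, Algebra.coe_norm_int]
  have h4 : (Algebra.norm ℤ β : ℚ) = (((k : ℤ) ^ 2 * Algebra.norm ℤ z : ℤ) : ℚ) := by
    push_cast
    exact h3
  have h5 : Algebra.norm ℤ β = (k : ℤ) ^ 2 * Algebra.norm ℤ z := by exact_mod_cast h4
  exact ⟨_, h5⟩

end NormSq

section KeyLemma

variable (L K : Type) [Field L] [NumberField L] [Field K] [NumberField K]
  [Algebra L K] [IsScalarTower ℚ L K]

theorem key_sq_dvd (hL2 : Module.finrank ℚ L = 2) (k : ℕ) (hk : 0 < k)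
    (α : 𝓞 K) (hα : α ≠ 0)
    (h : ∃ z : 𝓞 L, Algebra.norm L (α : K) = (k : L) * (z : L)) :
    k ^ 2 ∣ Ideal.absNorm (Ideal.span {α} ⊔ Ideal.span {((k : ℕ) : 𝓞 K)}) := by
  classical
  by_cases hk1 : k = 1
  · simp [hk1]
  have hk2 : 2 ≤ k := by omega
  set I := Ideal.span {α} with hIdef
  set J := Ideal.span {((k : ℕ) : 𝓞 K)} with hJdef
  have hkO : ((k : ℕ) : 𝓞 K) ≠ 0 := Nat.cast_ne_zero.2 hk.ne'
  have hI : I ≠ ⊥ := by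
    rw [hIdef, Ne, Ideal.span_singleton_eq_bot]; exact hα
  have hJ : J ≠ ⊥ := by
    rw [hJdef, Ne, Ideal.span_singleton_eq_bot]; exact hkO
  have hIJ : I ⊔ J ≠ ⊥ := by
    rw [Ne, sup_eq_bot_iff]; rintro ⟨h1, -⟩; exact hI h1
  have habs : Ideal.absNorm (I ⊔ J) ≠ 0 := by
    rw [Ne, Ideal.absNorm_eq_zero_iff]; exact hIJ
  rw [← Nat.factorization_le_iff_dvd (pow_ne_zero _ hk.ne') habs]
  intro p
  by_cases hp : p.Prime
  swap
  · simp [Nat.factorization_eq_zero_of_not_prime _ hp]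
  by_cases hpk : p ∣ k
  swap
  · have h0 : k.factorization p = 0 := Nat.factorization_eq_zero_of_not_dvd hpk
    simp [Nat.factorization_pow, h0]
  -- the interesting case : `p ∣ k`
  set Tp : Finset (Ideal (𝓞 K)) :=
    (normalizedFactors J).toFinset.filter (fun P => ((p : ℕ) : 𝓞 K) ∈ P) with hTpdef
  have hTprime : ∀ P ∈ Tp, Prime P := fun P hP =>
    prime_of_normalized_factor P (Multiset.mem_toFinset.1 (Finset.mem_filter.1 hP).1)
  set xr : Ideal (𝓞 K) → 𝓞 K :=
    fun P => if α ∈ P ^ ((normalizedFactors J).count P + 1) then 1 else 0 with hxr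
  obtain ⟨u, hu⟩ := IsDedekindDomain.exists_forall_sub_mem_ideal (R := 𝓞 K) (s := Tp)
    id (fun _ => 1) hTprime (fun i _ j _ hij => hij) (fun P => xr P.1)
  set β := α + ((k : ℕ) : 𝓞 K) * u with hβdef
  -- membership facts for `k`
  have hkJ : ((k : ℕ) : 𝓞 K) ∈ J := by rw [hJdef]; exact Ideal.mem_span_singleton_self _
  have hkpow : ∀ P : Ideal (𝓞 K), Prime P →
      ((k : ℕ) : 𝓞 K) ∈ P ^ ((normalizedFactors J).count P) := by
    intro P hPpr
    have : P ^ ((normalizedFactors J).count P) ∣ J := (pow_dvd_iff_le_count hPpr hJ).2 le_rfl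
    exact (Ideal.dvd_iff_le.1 this) hkJ
  have hknotpow : ∀ P : Ideal (𝓞 K), Prime P →
      ((k : ℕ) : 𝓞 K) ∉ P ^ ((normalizedFactors J).count P + 1) := by
    intro P hPpr hmem
    have h1 : J ≤ P ^ ((normalizedFactors J).count P + 1) := by
      rw [hJdef, Ideal.span_singleton_le_iff_mem]; exact hmem
    have h2 := (pow_dvd_iff_le_count hPpr hJ).1 (Ideal.dvd_iff_le.2 h1)
    omega
  -- main membership facts for β
  have hmain : ∀ P ∈ Tp,
      β ∈ P ^ (min ((normalizedFactors I).count P) ((normalizedFactors J).count P)) ∧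
      β ∉ P ^ (min ((normalizedFactors I).count P) ((normalizedFactors J).count P) + 1) := by
    intro P hPT
    have hPpr : Prime P := hTprime P hPT
    haveI : P.IsPrime := Ideal.isPrime_of_prime hPpr
    set a := (normalizedFactors I).count P with ha
    set t := (normalizedFactors J).count P with ht
    have hαmem : ∀ m : ℕ, m ≤ a → α ∈ P ^ m := by
      intro m hm
      have : P ^ m ∣ I := (pow_dvd_iff_le_count hPpr hI).2 (by omega)
      exact (Ideal.dvd_iff_le.1 this) (by rw [hIdef]; exact Ideal.mem_span_singleton_self _)
    have hαnot : α ∉ P ^ (a + 1) := by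
      intro hmem
      have h1 : I ≤ P ^ (a + 1) := by
        rw [hIdef, Ideal.span_singleton_le_iff_mem]; exact hmem
      have h2 := (pow_dvd_iff_le_count hPpr hI).1 (Ideal.dvd_iff_le.2 h1)
      omega
    refine ⟨?_, ?_⟩
    · apply Ideal.add_mem
      · exact hαmem _ (min_le_left _ _)
      · exact Ideal.mul_mem_right u _
          (Ideal.pow_le_pow_right (min_le_right a t) (hkpow P hPpr))
    · rcases lt_or_ge a t with hat | hat
      · rw [min_eq_left hat.le]
        intro hmem
        have hku : ((k : ℕ) : 𝓞 K) * u ∈ P ^ (a + 1) :=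
          Ideal.mul_mem_right u _ (Ideal.pow_le_pow_right (by omega) (hkpow P hPpr))
        have : α ∈ P ^ (a + 1) := by
          have := Ideal.sub_mem _ hmem hku
          simpa [hβdef] using this
        exact hαnot this
      · rw [min_eq_right hat]
        have hxmem : ((k : ℕ) : 𝓞 K) * (u - xr P) ∈ P ^ (t + 1) := by
          rw [pow_succ]
          exact Ideal.mul_mem_mul (hkpow P hPpr) (by simpa using hu P hPT)
        by_cases hα1 : α ∈ P ^ (t + 1)
        · have hxrP : xr P = 1 := by rw [hxr]; simp only [← ht]; rw [if_pos hα1]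
          intro hmem
          have hkmem : ((k : ℕ) : 𝓞 K) ∈ P ^ (t + 1) := by
            have heq : ((k : ℕ) : 𝓞 K) = β - α - ((k : ℕ) : 𝓞 K) * (u - xr P) := by
              rw [hβdef, hxrP]; ring
            rw [heq]
            exact Ideal.sub_mem _ (Ideal.sub_mem _ hmem hα1) hxmem
          exact hknotpow P hPpr (by rwa [← ht])
        · have hxrP : xr P = 0 := by rw [hxr]; simp only [← ht]; rw [if_neg hα1]
          intro hmem
          have : α ∈ P ^ (t + 1) := by
            have heq : α = β - ((k : ℕ) : 𝓞 K) * (u - xr P) := by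
              rw [hβdef, hxrP]; ring
            rw [heq]
            exact Ideal.sub_mem _ hmem hxmem
          exact hα1 this
  -- Tp contains a prime over p
  have hpO : ((p : ℕ) : 𝓞 K) ≠ 0 := Nat.cast_ne_zero.2 hp.pos.ne'
  have hJp : J ≤ Ideal.span {((p : ℕ) : 𝓞 K)} := by
    rw [hJdef, Ideal.span_singleton_le_span_singleton]
    obtain ⟨c, rfl⟩ := hpk
    push_cast
    exact Dvd.intro _ rfl
  have hpnetop : Ideal.span {((p : ℕ) : 𝓞 K)} ≠ ⊤ := by
    intro htop
    have h1 : Ideal.absNorm (Ideal.span {((p : ℕ) : 𝓞 K)}) = 1 := by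
      rw [htop, Ideal.absNorm_top]
    rw [Ideal.absNorm_span_singleton] at h1
    have hbasis := Module.Free.chooseBasis ℤ (𝓞 K)
    rw [show ((p : ℕ) : 𝓞 K) = algebraMap ℤ (𝓞 K) ((p : ℕ) : ℤ) by push_cast; rfl,
      Algebra.norm_algebraMap_of_basis hbasis] at h1
    have hcard : 0 < Fintype.card (Module.Free.ChooseBasisIndex ℤ (𝓞 K)) := Fintype.card_pos
    rw [← Nat.cast_pow, Int.natAbs_natCast] at h1
    have hgt : 1 < p ^ Fintype.card (Module.Free.ChooseBasisIndex ℤ (𝓞 K)) :=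
      Nat.one_lt_pow hcard.ne' hp.one_lt
    omega
  obtain ⟨M, hMmax, hMle⟩ := Ideal.exists_le_maximal _ hpnetop
  have hMne : M ≠ ⊥ := by
    intro hbot
    rw [hbot, le_bot_iff, Ideal.span_singleton_eq_bot] at hMle
    exact hpO hMle
  have hMpr : Prime M := (Ideal.prime_iff_isPrime hMne).2 hMmax.isPrime
  have hMTp : M ∈ Tp := by
    rw [hTpdef, Finset.mem_filter, Multiset.mem_toFinset]
    constructor
    · rw [← Multiset.count_pos, ← Nat.succ_le_iff]
      exact (pow_dvd_iff_le_count hMpr hJ).1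
        (by rw [pow_one, Ideal.dvd_iff_le]; exact le_trans hJp hMle)
    · exact hMle (Ideal.mem_span_singleton_self _)
  have hβ0 : β ≠ 0 := by
    intro h0
    exact (hmain M hMTp).2 (by rw [h0]; exact zero_mem _)
  -- counts of span β
  have hcount : ∀ P ∈ Tp, (normalizedFactors (Ideal.span {β})).count P
      = min ((normalizedFactors I).count P) ((normalizedFactors J).count P) := by
    intro P hPT
    haveI : P.IsPrime := Ideal.isPrime_of_prime (hTprime P hPT)
    exact Ideal.count_normalizedFactors_eq
      (by rw [Ideal.span_singleton_le_iff_mem]; exact (hmain P hPT).1)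
      (by rw [Ideal.span_singleton_le_iff_mem]; exact (hmain P hPT).2)
  -- divisibility of the integer norm of β
  have hβnorm : ∃ z : 𝓞 L, Algebra.norm L (β : K) = (k : L) * (z : L) := by
    obtain ⟨z1, hz1⟩ := h
    obtain ⟨z2, hz2⟩ := exists_norm_add_eq L K k hk α u
    refine ⟨z1 + z2, ?_⟩
    have hβK : (β : K) = (α : K) + ((k : ℕ) : K) * (u : K) := by
      rw [hβdef]; push_cast; ring
    rw [hβK, hz2, hz1]; push_cast; ring
  have hk2N := norm_int_sq_dvd L K hL2 k β hβnorm
  have hNnat : k ^ 2 ∣ (Algebra.norm ℤ β).natAbs := by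
    have h1 : ((k ^ 2 : ℕ) : ℤ) ∣ Algebra.norm ℤ β := by push_cast; exact hk2N
    exact Int.natCast_dvd_natCast.1 (Int.dvd_natAbs.2 h1)
  have hNne : (Algebra.norm ℤ β).natAbs ≠ 0 := by
    rw [Int.natAbs_ne_zero]
    intro h0
    exact hβ0 ((Algebra.norm_eq_zero_iff_of_basis (Module.Free.chooseBasis ℤ (𝓞 K))).1 h0)
  have hlow : (k ^ 2).factorization p ≤ ((Algebra.norm ℤ β).natAbs).factorization p :=
    (Nat.factorization_le_iff_dvd (pow_ne_zero _ hk.ne') hNne).2 hNnat p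
  -- the two factorization sums agree
  set c : Ideal (𝓞 K) → ℕ := fun P => (Ideal.absNorm P).factorization p with hc
  have hsumβ : ((Algebra.norm ℤ β).natAbs).factorization p
      = ((normalizedFactors (Ideal.span {β})).map c).sum := by
    rw [← Ideal.absNorm_span_singleton]
    exact absNorm_factorization p (by rw [Ne, Ideal.span_singleton_eq_bot]; exact hβ0)
  have hsupfac : normalizedFactors (I ⊔ J) = normalizedFactors I ∩ normalizedFactors J := by
    rw [sup_eq_prod_inf_factors hI hJ]
    exact normalizedFactors_prod_of_prime
      (fun P hP => prime_of_normalized_factor P (Multiset.mem_inter.1 hP).1)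
  have hsumb : (Ideal.absNorm (I ⊔ J)).factorization p
      = ((normalizedFactors I ∩ normalizedFactors J).map c).sum := by
    rw [absNorm_factorization p hIJ, hsupfac]
  have hCP : ∀ P : Ideal (𝓞 K), Prime P → c P ≠ 0 → P ∈ Tp := by
    intro P hPpr hcP
    have hdvd : p ∣ Ideal.absNorm P := Nat.dvd_of_factorization_pos hcP
    have hmem : ((p : ℕ) : 𝓞 K) ∈ P := (prime_dvd_absNorm_iff hPpr hp).1 hdvd
    rw [hTpdef, Finset.mem_filter, Multiset.mem_toFinset]
    refine ⟨?_, hmem⟩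
    have hle : J ≤ P := le_trans hJp (by rwa [Ideal.span_singleton_le_iff_mem])
    rw [← Multiset.count_pos, ← Nat.succ_le_iff]
    exact (pow_dvd_iff_le_count hPpr hJ).1 (by rw [pow_one, Ideal.dvd_iff_le]; exact hle)
  have hsums_eq : ((normalizedFactors (Ideal.span {β})).map c).sum
      = ((normalizedFactors I ∩ normalizedFactors J).map c).sum := by
    rw [Finset.sum_multiset_map_count, Finset.sum_multiset_map_count]
    set s1 := normalizedFactors (Ideal.span {β}) with hs1
    set s2 := normalizedFactors I ∩ normalizedFactors J with hs2
    have e1 : (∑ P ∈ s1.toFinset, s1.count P • c P)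
        = ∑ P ∈ s1.toFinset ∪ s2.toFinset, s1.count P • c P :=
      Finset.sum_subset Finset.subset_union_left (fun P _ hP => by
        rw [Multiset.count_eq_zero_of_notMem (fun hm => hP (Multiset.mem_toFinset.2 hm)),
          zero_smul])
    have e2 : (∑ P ∈ s2.toFinset, s2.count P • c P)
        = ∑ P ∈ s1.toFinset ∪ s2.toFinset, s2.count P • c P :=
      Finset.sum_subset Finset.subset_union_right (fun P _ hP => by
        rw [Multiset.count_eq_zero_of_notMem (fun hm => hP (Multiset.mem_toFinset.2 hm)),
          zero_smul])
    rw [e1, e2]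
    refine Finset.sum_congr rfl (fun P hPu => ?_)
    by_cases hcP : c P = 0
    · simp [hcP]
    · have hPpr : Prime P := by
        rcases Finset.mem_union.1 hPu with hP1 | hP2
        · exact prime_of_normalized_factor P (Multiset.mem_toFinset.1 hP1)
        · exact prime_of_normalized_factor P
            (Multiset.mem_inter.1 (Multiset.mem_toFinset.1 hP2)).1
      have hPT : P ∈ Tp := hCP P hPpr hcP
      rw [hs1, hcount P hPT, hs2, Multiset.count_inter]
  rw [hsumβ, hsums_eq, ← hsumb] at hlow
  exact hlow

end KeyLemma

theorem real_per_factor {eps : ℝ} (heps : 0 < eps) (N e : ℕ) (hN : 2 ≤ N) :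
    ((e : ℝ) + 1) ≤ (2 + 4 / (eps * Real.log 2) ^ 2) * (N : ℝ) ^ (eps * e) := by
  set cc := eps * Real.log 2 with hcc
  have hcc0 : 0 < cc := mul_pos heps (Real.log_pos one_lt_two)
  have h2N : (2 : ℝ) ^ (eps * e) ≤ (N : ℝ) ^ (eps * e) :=
    Real.rpow_le_rpow (by norm_num) (by exact_mod_cast hN)
      (by positivity)
  have hexp : (2 : ℝ) ^ (eps * e) = Real.exp (cc * e) := by
    rw [Real.rpow_def_of_pos (by norm_num : (0:ℝ) < 2), hcc]
    ring_nf
  have hE : (1 + cc * e / 2) ^ 2 ≤ Real.exp (cc * e) := by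
    have h1 : 1 + cc * e / 2 ≤ Real.exp (cc * e / 2) := by
      have := Real.add_one_le_exp (cc * e / 2)
      linarith
    have h2 : (0 : ℝ) ≤ 1 + cc * e / 2 := by positivity
    have h3 := mul_le_mul h1 h1 h2 (Real.exp_nonneg _)
    calc (1 + cc * e / 2) ^ 2 = (1 + cc * e / 2) * (1 + cc * e / 2) := by ring
      _ ≤ Real.exp (cc * e / 2) * Real.exp (cc * e / 2) := h3
      _ = Real.exp (cc * e) := by rw [← Real.exp_add]; ring_nf
  have hEe : (e : ℝ) + 1 ≤ (2 + 4 / cc ^ 2) * ((1 + cc * e / 2) ^ 2) := by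
    have hy : (0:ℝ) ≤ cc * e / 2 := by positivity
    have hA1 : (1 : ℝ) ≤ (1 + cc * e / 2) ^ 2 := by nlinarith [hy, sq_nonneg (cc * e / 2)]
    have hA2 : (cc * e / 2) ^ 2 ≤ (1 + cc * e / 2) ^ 2 := by nlinarith [hy]
    have hkey : (4 / cc ^ 2) * ((cc * e / 2) ^ 2) = (e : ℝ) ^ 2 := by
      field_simp
      ring
    have he2 : (e : ℝ) + 1 ≤ (e : ℝ) ^ 2 + 2 := by nlinarith [sq_nonneg ((e : ℝ) - 1)]
    have hc4 : (0 : ℝ) ≤ 4 / cc ^ 2 := by positivity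
    nlinarith [mul_le_mul_of_nonneg_left hA2 hc4]
  calc (e : ℝ) + 1 ≤ (2 + 4 / cc ^ 2) * ((1 + cc * e / 2) ^ 2) := hEe
    _ ≤ (2 + 4 / cc ^ 2) * Real.exp (cc * e) := by
        have : (0:ℝ) ≤ 2 + 4 / cc ^ 2 := by positivity
        exact mul_le_mul_of_nonneg_left hE this
    _ = (2 + 4 / cc ^ 2) * ((2:ℝ) ^ (eps * e)) := by rw [hexp]
    _ ≤ (2 + 4 / cc ^ 2) * ((N:ℝ) ^ (eps * e)) := by
        have : (0:ℝ) ≤ 2 + 4 / cc ^ 2 := by positivity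
        exact mul_le_mul_of_nonneg_left h2N this

section DivisorCount

variable (K : Type) [Field K] [NumberField K]

theorem card_divisors_le [DecidableEq (Ideal (𝓞 K))] (k : ℕ) (hk : 0 < k) :
    Nat.card {b : Ideal (𝓞 K) // Ideal.span {((k : ℕ) : 𝓞 K)} ≤ b}
      ≤ ∏ P ∈ (normalizedFactors (Ideal.span {((k : ℕ) : 𝓞 K)})).toFinset,
          ((normalizedFactors (Ideal.span {((k : ℕ) : 𝓞 K)})).count P + 1) := by
  classical
  set J := Ideal.span {((k : ℕ) : 𝓞 K)} with hJdef
  have hJ : J ≠ ⊥ := by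
    rw [hJdef, Ne, Ideal.span_singleton_eq_bot]
    exact Nat.cast_ne_zero.2 hk.ne'
  set F := (normalizedFactors J).toFinset with hF
  have hcount_le : ∀ (b : {b : Ideal (𝓞 K) // J ≤ b}) (P : Ideal (𝓞 K)),
      (normalizedFactors b.1).count P ≤ (normalizedFactors J).count P := by
    intro b P
    convert count_le_of_ideal_ge b.2 hJ P
  set f : {b : Ideal (𝓞 K) // J ≤ b} → ((P : F) → Fin ((normalizedFactors J).count P.1 + 1)) :=
    fun b P => ⟨(normalizedFactors b.1).count P.1, Nat.lt_succ_of_le (hcount_le b P.1)⟩ with hf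
  have hinj : Function.Injective f := by
    intro b1 b2 heq
    have hb1 : b1.1 ≠ ⊥ := fun hbot => hJ (le_bot_iff.1 (hbot ▸ b1.2))
    have hb2 : b2.1 ≠ ⊥ := fun hbot => hJ (le_bot_iff.1 (hbot ▸ b2.2))
    have hNF : normalizedFactors b1.1 = normalizedFactors b2.1 := by
      ext P
      by_cases hP : P ∈ F
      · have := congrFun heq ⟨P, hP⟩
        simpa [hf] using congrArg Fin.val this
      · have h0 : (normalizedFactors J).count P = 0 := by
          rw [Multiset.count_eq_zero]
          exact fun hm => hP (Multiset.mem_toFinset.2 hm)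
        have := hcount_le b1 P
        have := hcount_le b2 P
        omega
    apply Subtype.ext
    rw [← prod_normalizedFactors_eq_self hb1, ← prod_normalizedFactors_eq_self hb2, hNF]
  calc Nat.card {b : Ideal (𝓞 K) // J ≤ b} ≤ Nat.card ((P : F) → Fin ((normalizedFactors J).count P.1 + 1)) :=
        Nat.card_le_card_of_injective f hinj
    _ = ∏ P : F, ((normalizedFactors J).count P.1 + 1) := by
        rw [Nat.card_pi]
        simp only [Nat.card_eq_fintype_card, Fintype.card_fin]
    _ = ∏ P ∈ F, ((normalizedFactors J).count P + 1) :=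
        Finset.prod_coe_sort F (fun P => (normalizedFactors J).count P + 1)

theorem ideal_divisor_count_bound (ξ : ℝ) (hξ : 0 < ξ) :
    ∃ C : ℝ, 0 < C ∧ ∀ k : ℕ, 0 < k →
      (Nat.card {b : Ideal (𝓞 K) // Ideal.span {((k : ℕ) : 𝓞 K)} ≤ b} : ℝ)
        ≤ C * (k : ℝ) ^ ξ := by
  classical
  set nn := Fintype.card (Module.Free.ChooseBasisIndex ℤ (𝓞 K)) with hnn
  have hnn0 : 0 < nn := Fintype.card_pos
  set eps := ξ / nn with heps
  have heps0 : 0 < eps := div_pos hξ (by exact_mod_cast hnn0)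
  set C₀ : ℝ := 2 + 4 / (eps * Real.log 2) ^ 2 with hC₀
  have hC₀1 : 1 ≤ C₀ := by
    have h4 : (0:ℝ) ≤ 4 / (eps * Real.log 2) ^ 2 := by positivity
    rw [hC₀]
    linarith
  set B : ℕ := ⌈(2 : ℝ) ^ (1 / eps)⌉₊ with hB
  set M := (Ideal.finite_setOf_absNorm_le (S := 𝓞 K) B).toFinset.card with hM
  refine ⟨C₀ ^ M, by positivity, ?_⟩
  intro k hk
  set J := Ideal.span {((k : ℕ) : 𝓞 K)} with hJdef
  have hJ : J ≠ ⊥ := by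
    rw [hJdef, Ne, Ideal.span_singleton_eq_bot]
    exact Nat.cast_ne_zero.2 hk.ne'
  have habsJ : Ideal.absNorm J = k ^ nn := by
    rw [hJdef, Ideal.absNorm_span_singleton,
      show ((k : ℕ) : 𝓞 K) = algebraMap ℤ (𝓞 K) ((k : ℕ) : ℤ) by push_cast; rfl,
      Algebra.norm_algebraMap_of_basis (Module.Free.chooseBasis ℤ (𝓞 K)), ← Nat.cast_pow,
      Int.natAbs_natCast]
  set F := (normalizedFactors J).toFinset with hF
  have hprimeF : ∀ P ∈ F, Prime P := fun P hP =>
    prime_of_normalized_factor P (Multiset.mem_toFinset.1 hP)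
  have habs2 : ∀ P ∈ F, 2 ≤ Ideal.absNorm P := by
    intro P hP
    have hPpr := hprimeF P hP
    have h0 : Ideal.absNorm P ≠ 0 := by
      rw [Ne, Ideal.absNorm_eq_zero_iff]; exact hPpr.ne_zero
    have h1 : Ideal.absNorm P ≠ 1 := by
      rw [Ne, Ideal.absNorm_eq_one_iff]
      intro htop
      exact hPpr.not_unit (Ideal.isUnit_iff.2 htop)
    omega
  -- real-number estimate
  have step1 : (Nat.card {b : Ideal (𝓞 K) // J ≤ b} : ℝ)
      ≤ ∏ P ∈ F, (((normalizedFactors J).count P : ℝ) + 1) := by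
    have h1 := card_divisors_le K k hk
    calc (Nat.card {b : Ideal (𝓞 K) // J ≤ b} : ℝ)
        ≤ ((∏ P ∈ F, ((normalizedFactors J).count P + 1) : ℕ) : ℝ) := by exact_mod_cast h1
      _ = ∏ P ∈ F, (((normalizedFactors J).count P : ℝ) + 1) := by push_cast; rfl
  have step2 : ∏ P ∈ F, (((normalizedFactors J).count P : ℝ) + 1)
      ≤ (∏ P ∈ F, (if Ideal.absNorm P ≤ B then C₀ else 1))
        * ∏ P ∈ F, ((Ideal.absNorm P : ℝ) ^ ((normalizedFactors J).count P)) ^ eps := by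
    rw [← Finset.prod_mul_distrib]
    refine Finset.prod_le_prod (fun P _ => by positivity) (fun P hP => ?_)
    have hN2 := habs2 P hP
    have hNpow : ((Ideal.absNorm P : ℝ) ^ ((normalizedFactors J).count P)) ^ eps
        = (Ideal.absNorm P : ℝ) ^ (eps * ((normalizedFactors J).count P)) := by
      rw [← Real.rpow_natCast ((Ideal.absNorm P : ℝ)) ((normalizedFactors J).count P),
        ← Real.rpow_mul (by positivity), mul_comm]
    by_cases hsmall : Ideal.absNorm P ≤ B
    · rw [if_pos hsmall, hNpow]
      exact real_per_factor heps0 _ _ hN2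
    · rw [if_neg hsmall, one_mul, hNpow]
      -- here `(absNorm P : ℝ) ^ eps ≥ 2`
      have hBlt : ((2:ℝ) ^ (1/eps)) ≤ (Ideal.absNorm P : ℝ) := by
        have h1 : (B : ℝ) ≤ (Ideal.absNorm P : ℝ) := by
          exact_mod_cast Nat.le_of_lt (Nat.lt_of_not_le hsmall)
        calc ((2:ℝ) ^ (1/eps)) ≤ (B : ℝ) := Nat.le_ceil _
          _ ≤ _ := h1
      have h2le : (2 : ℝ) ≤ (Ideal.absNorm P : ℝ) ^ eps := by
        have := Real.rpow_le_rpow (by positivity) hBlt heps0.le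
        rwa [← Real.rpow_mul (by norm_num), one_div, inv_mul_cancel₀ heps0.ne',
          Real.rpow_one] at this
      set e := (normalizedFactors J).count P
      have h1 : ((e : ℝ) + 1) ≤ (2:ℝ) ^ e := by
        have := Nat.lt_two_pow_self (n := e)
        have h' : (e + 1 : ℕ) ≤ 2 ^ e := this
        exact_mod_cast h'
      calc ((e : ℝ) + 1) ≤ (2:ℝ) ^ e := h1
        _ ≤ ((Ideal.absNorm P : ℝ) ^ eps) ^ e :=
            pow_le_pow_left₀ (by norm_num) h2le e
        _ = (Ideal.absNorm P : ℝ) ^ (eps * e) := by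
            rw [← Real.rpow_natCast ((Ideal.absNorm P : ℝ) ^ eps) e,
              ← Real.rpow_mul (by positivity)]
  have step3 : (∏ P ∈ F, (if Ideal.absNorm P ≤ B then C₀ else 1)) ≤ C₀ ^ M := by
    rw [← Finset.prod_filter_mul_prod_filter_not F (fun P => Ideal.absNorm P ≤ B)]
    have h1 : ∏ P ∈ F.filter (fun P => Ideal.absNorm P ≤ B), (if Ideal.absNorm P ≤ B then C₀ else 1)
        = C₀ ^ (F.filter (fun P => Ideal.absNorm P ≤ B)).card := by
      rw [Finset.prod_congr rfl (fun P hP => if_pos (Finset.mem_filter.1 hP).2),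
        Finset.prod_const]
    have h2 : ∏ P ∈ F.filter (fun P => ¬ Ideal.absNorm P ≤ B), (if Ideal.absNorm P ≤ B then C₀ else 1)
        = 1 := by
      rw [Finset.prod_congr rfl (fun P hP => if_neg (Finset.mem_filter.1 hP).2)]
      exact Finset.prod_const_one
    rw [h1, h2, mul_one]
    apply pow_le_pow_right₀ hC₀1
    rw [hM]
    apply Finset.card_le_card
    intro P hP
    rw [Set.Finite.mem_toFinset]
    exact (Finset.mem_filter.1 hP).2
  have step4 : ∏ P ∈ F, ((Ideal.absNorm P : ℝ) ^ ((normalizedFactors J).count P)) ^ eps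
      = (k : ℝ) ^ ξ := by
    rw [Real.finset_prod_rpow _ _ (fun P _ => by positivity)]
    have habsprod : ∏ P ∈ F, (Ideal.absNorm P) ^ ((normalizedFactors J).count P) = k ^ nn := by
      rw [← habsJ]
      conv_rhs => rw [← prod_normalizedFactors_eq_self hJ]
      rw [map_multiset_prod, ← Finset.prod_multiset_map_count]
    have : ∏ P ∈ F, ((Ideal.absNorm P : ℝ)) ^ ((normalizedFactors J).count P)
        = ((k : ℝ)) ^ (nn : ℕ) := by exact_mod_cast congrArg (Nat.cast (R := ℝ)) habsprod
    rw [this, ← Real.rpow_natCast ((k:ℝ)) nn, ← Real.rpow_mul (by positivity)]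
    have hexp : ((nn : ℕ) : ℝ) * eps = ξ := by
      rw [heps]
      field_simp
    rw [hexp]
  calc (Nat.card {b : Ideal (𝓞 K) // J ≤ b} : ℝ)
      ≤ ∏ P ∈ F, (((normalizedFactors J).count P : ℝ) + 1) := step1
    _ ≤ (∏ P ∈ F, (if Ideal.absNorm P ≤ B then C₀ else 1))
        * ∏ P ∈ F, ((Ideal.absNorm P : ℝ) ^ ((normalizedFactors J).count P)) ^ eps := step2
    _ ≤ C₀ ^ M * ((k : ℝ) ^ ξ) := by
        rw [step4]
        exact mul_le_mul_of_nonneg_right step3 (by positivity)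

end DivisorCount

set_option synthInstance.maxHeartbeats 1000000
set_option maxHeartbeats 4000000

/-- The bounds (RB) of §8 of Browning–Heath-Brown for
`R(k) = #{v ∈ ℕⁿ : 0 < v_j ≤ k, k ∣ 𝐍_{K/L}(v) in 𝔬_L}`: for every `ξ > 0` one has
`R(k) ≪_ξ k^{n−2+ξ}`, and `R(k) < kⁿ` for every `k > 1`. -/
theorem relative_norm_divisibility_count_bounds
    (n : ℕ) (hn0 : 0 < n) (hn4 : 4 ≤ n) (hneven : Even n)
    (L : Type) [Field L] [NumberField L] (hL2 : Module.finrank ℚ L = 2)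
    (K : Type) [Field K] [NumberField K] [Algebra L K] [IsScalarTower ℚ L K]
    (hKn : Module.finrank ℚ K = n)
    (ωK : Module.Basis (Fin n) ℤ (𝓞 K)) (hω1 : ωK ⟨0, hn0⟩ = 1) :
    (∀ ξ : ℝ, 0 < ξ → ∃ C : ℝ, 0 < C ∧ ∀ k : ℕ, 1 ≤ k →
      ((Nat.card {v : Fin n → ℕ //
          (∀ j, 0 < v j ∧ v j ≤ k)
          ∧ ∃ z : 𝓞 L, Algebra.norm L (((∑ i, (v i : ℤ) • ωK i : 𝓞 K) : K))
              = (k : L) * (z : L)} : ℝ))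
        ≤ C * (k : ℝ) ^ ((n : ℝ) - 2 + ξ))
    ∧ (∀ k : ℕ, 1 < k →
      Nat.card {v : Fin n → ℕ //
          (∀ j, 0 < v j ∧ v j ≤ k)
          ∧ ∃ z : 𝓞 L, Algebra.norm L (((∑ i, (v i : ℤ) • ωK i : 𝓞 K) : K))
              = (k : L) * (z : L)}
        < k ^ n) := by
  classical
  have hn2 : 2 ≤ n := by omega
  -- basic facts about the coordinates
  have hrepr : ∀ (v : Fin n → ℕ) (i : Fin n),
      (ωK.repr (∑ j, (v j : ℤ) • ωK j)) i = (v i : ℤ) := by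
    intro v i
    rw [Module.Basis.repr_sum_self]
  have hα0 : ∀ v : Fin n → ℕ, (∀ j, 0 < v j) → (∑ j, ((v j : ℤ)) • ωK j) ≠ 0 := by
    intro v hv h0
    have h1 := hrepr v ⟨0, hn0⟩
    rw [h0, map_zero] at h1
    have h2 := hv ⟨0, hn0⟩
    simp only [Finsupp.coe_zero, Pi.zero_apply] at h1
    omega
  -- injectivity of the box modulo k
  have hbox : ∀ (k : ℕ), 0 < k → ∀ v w : Fin n → ℕ,
      (∀ j, 0 < v j ∧ v j ≤ k) → (∀ j, 0 < w j ∧ w j ≤ k) →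
      (Ideal.span {((k : ℕ) : 𝓞 K)}).mkQ (∑ j, (v j : ℤ) • ωK j)
        = (Ideal.span {((k : ℕ) : 𝓞 K)}).mkQ (∑ j, (w j : ℤ) • ωK j) → v = w := by
    intro k hk v w hv hw heq
    simp only [Submodule.mkQ_apply] at heq
    rw [Submodule.Quotient.eq] at heq
    rw [Ideal.mem_span_singleton'] at heq
    obtain ⟨c, hc⟩ := heq
    funext i
    have h1 : (ωK.repr (∑ j, (v j : ℤ) • ωK j - ∑ j, (w j : ℤ) • ωK j)) i
        = (v i : ℤ) - (w i : ℤ) := by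
      rw [map_sub]
      simp only [Finsupp.coe_sub, Pi.sub_apply]
      rw [hrepr, hrepr]
    have h2 : (ωK.repr (c * ((k : ℕ) : 𝓞 K))) i = (ωK.repr c) i * (k : ℤ) := by
      have : c * ((k : ℕ) : 𝓞 K) = ((k : ℤ)) • c := by
        push_cast
        ring_nf
        norm_cast
      rw [this, map_smul]
      simp only [Finsupp.coe_smul, Pi.smul_apply, smul_eq_mul]
      ring
    rw [← hc, h2] at h1
    set a := (ωK.repr c) i with ha
    have hk' : (0 : ℤ) < (k : ℤ) := by exact_mod_cast hk
    have hv1 := (hv i).1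
    have hv2 := (hv i).2
    have hw1 := (hw i).1
    have hw2 := (hw i).2
    have hb1 : (v i : ℤ) - (w i : ℤ) < (k : ℤ) := by
      have : (v i : ℤ) ≤ (k : ℤ) := by exact_mod_cast hv2
      have : (1 : ℤ) ≤ (w i : ℤ) := by exact_mod_cast hw1
      omega
    have hb2 : -(k : ℤ) < (v i : ℤ) - (w i : ℤ) := by
      have : (w i : ℤ) ≤ (k : ℤ) := by exact_mod_cast hw2
      have : (1 : ℤ) ≤ (v i : ℤ) := by exact_mod_cast hv1
      omega
    have ha0 : a = 0 := by
      by_contra hne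
      have h3 : 1 ≤ |a| := Int.one_le_abs hne
      have h4 : |a * (k : ℤ)| < (k : ℤ) := by
        rw [h1, abs_lt]
        exact ⟨hb2, hb1⟩
      rw [abs_mul, abs_of_pos hk'] at h4
      nlinarith
    rw [ha0, zero_mul] at h1
    have : (v i : ℤ) = (w i : ℤ) := by omega
    exact_mod_cast this
  -- cardinality of the full quotient
  have hQcard : ∀ k : ℕ, 0 < k →
      Ideal.absNorm (Ideal.span {((k : ℕ) : 𝓞 K)}) = k ^ n := by
    intro k hk
    rw [Ideal.absNorm_span_singleton,
      show ((k : ℕ) : 𝓞 K) = algebraMap ℤ (𝓞 K) ((k : ℕ) : ℤ) by push_cast; rfl,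
      Algebra.norm_algebraMap_of_basis ωK, ← Nat.cast_pow, Int.natAbs_natCast,
      Fintype.card_fin]
  constructor
  · -- part 1
    intro ξ hξ
    obtain ⟨C, hC0, hC⟩ := ideal_divisor_count_bound K ξ hξ
    refine ⟨C, hC0, ?_⟩
    intro k hk1
    have hk0 : 0 < k := hk1
    set J' : Ideal (𝓞 K) := Ideal.span {((k : ℕ) : 𝓞 K)} with hJ'def
    have hdivfin : {b : Ideal (𝓞 K) | J' ≤ b}.Finite := by
      apply Set.Finite.subset (Ideal.finite_setOf_absNorm_le (k ^ n))
      intro b hb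
      have hdvd : Ideal.absNorm b ∣ Ideal.absNorm J' := Ideal.absNorm_dvd_absNorm_of_le hb
      rw [hQcard k hk0] at hdvd
      exact Nat.le_of_dvd (by positivity) hdvd
    set D : Set (Ideal (𝓞 K)) := {b | J' ≤ b ∧ k ^ 2 ∣ Ideal.absNorm b} with hDdef
    have hDfin : D.Finite := hdivfin.subset (fun b hb => hb.1)
    haveI hDfint : Fintype D := hDfin.fintype
    have hQfin : Finite ((𝓞 K) ⧸ J') := by
      apply Nat.finite_of_card_ne_zero
      have : Nat.card ((𝓞 K) ⧸ J') = k ^ n := by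
        rw [← hQcard k hk0, Ideal.absNorm_apply, Submodule.cardQuot_apply]
      rw [this]
      positivity
    -- fiber bound
    have hfiber : ∀ b : Ideal (𝓞 K), b ∈ D →
        Nat.card {x : (𝓞 K) ⧸ J' // x ∈ Submodule.map J'.mkQ b} ≤ k ^ (n - 2) := by
      intro b hb
      obtain ⟨hble, m, hm⟩ := hb
      have hlag := AddSubgroup.card_eq_card_quotient_mul_card_addSubgroup
        (Submodule.map J'.mkQ b).toAddSubgroup
      have hequiv := Submodule.quotientQuotientEquivQuotient J' b hble
      have hcardeq : Nat.card (((𝓞 K) ⧸ J') ⧸ (Submodule.map J'.mkQ b))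
          = Nat.card ((𝓞 K) ⧸ b) := Nat.card_congr hequiv.toEquiv
      have hq1 : Nat.card ((𝓞 K) ⧸ J') = k ^ n := by
        rw [← hQcard k hk0, Ideal.absNorm_apply, Submodule.cardQuot_apply]
      have hq2 : Nat.card ((𝓞 K) ⧸ b) = Ideal.absNorm b := by
        rw [Ideal.absNorm_apply, Submodule.cardQuot_apply]
      have hmain : k ^ n = Ideal.absNorm b * Nat.card {x : (𝓞 K) ⧸ J' // x ∈ Submodule.map J'.mkQ b} := by
        rw [← hq1, ← hq2, ← hcardeq]
        exact hlag
      rw [hm] at hmain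
      have hsplit : k ^ n = k ^ 2 * k ^ (n - 2) := by
        rw [← pow_add]
        congr 1
        omega
      have hcancel : m * Nat.card {x : (𝓞 K) ⧸ J' // x ∈ Submodule.map J'.mkQ b} = k ^ (n - 2) := by
        apply Nat.eq_of_mul_eq_mul_left (show 0 < k ^ 2 by positivity)
        rw [← mul_assoc, ← hmain, hsplit]
      have hm0 : 0 < m := by
        rcases Nat.eq_zero_or_pos m with h0 | h0
        · rw [h0, zero_mul] at hcancel
          have : 0 < k ^ (n - 2) := by positivity
          omega
        · exact h0
      calc Nat.card {x : (𝓞 K) ⧸ J' // x ∈ Submodule.map J'.mkQ b}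
          ≤ m * Nat.card {x : (𝓞 K) ⧸ J' // x ∈ Submodule.map J'.mkQ b} :=
            Nat.le_mul_of_pos_left _ hm0
        _ = k ^ (n - 2) := hcancel
    -- the injection into the sigma type
    set S := {v : Fin n → ℕ //
          (∀ j, 0 < v j ∧ v j ≤ k)
          ∧ ∃ z : 𝓞 L, Algebra.norm L (((∑ i, (v i : ℤ) • ωK i : 𝓞 K) : K))
              = (k : L) * (z : L)} with hSdef
    set T := (Σ b : D, {x : (𝓞 K) ⧸ J' // x ∈ Submodule.map J'.mkQ b.1}) with hTdef
    have hbD : ∀ v : S, (Ideal.span {(∑ i, ((v.1 i : ℤ)) • ωK i : 𝓞 K)} ⊔ J') ∈ D := by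
      intro v
      refine ⟨le_sup_right, ?_⟩
      exact key_sq_dvd L K hL2 k hk0 _ (hα0 v.1 (fun j => (v.2.1 j).1)) v.2.2
    set Φ : S → T := fun v =>
      ⟨⟨Ideal.span {(∑ i, ((v.1 i : ℤ)) • ωK i : 𝓞 K)} ⊔ J', hbD v⟩,
        ⟨J'.mkQ (∑ i, ((v.1 i : ℤ)) • ωK i), Submodule.mem_map_of_mem
          (Submodule.mem_sup_left (Ideal.mem_span_singleton_self _))⟩⟩ with hΦdef
    have hΦinj : Function.Injective Φ := by
      intro v w heq
      have h2 := congrArg (fun t : T => (t.2.1 : (𝓞 K) ⧸ J')) heq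
      exact Subtype.ext (hbox k hk0 v.1 w.1 v.2.1 w.2.1 h2)
    haveI : ∀ b : D, Finite {x : (𝓞 K) ⧸ J' // x ∈ Submodule.map J'.mkQ b.1} := fun b =>
      Subtype.finite
    haveI : Finite T := by
      rw [hTdef]
      infer_instance
    have hcard1 : Nat.card S ≤ Nat.card T := Nat.card_le_card_of_injective Φ hΦinj
    -- compute card of T
    letI : ∀ b : D, Fintype {x : (𝓞 K) ⧸ J' // x ∈ Submodule.map J'.mkQ b.1} := fun b =>
      Fintype.ofFinite _
    have hcard2 : Nat.card T ≤ (Fintype.card D) * k ^ (n - 2) := by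
      rw [hTdef, Nat.card_eq_fintype_card, Fintype.card_sigma]
      calc ∑ b : D, Fintype.card {x : (𝓞 K) ⧸ J' // x ∈ Submodule.map J'.mkQ b.1}
          ≤ ∑ _b : D, k ^ (n - 2) := by
            apply Finset.sum_le_sum
            intro b _
            rw [← Nat.card_eq_fintype_card]
            exact hfiber b.1 b.2
        _ = (Fintype.card D) * k ^ (n - 2) := by
            rw [Finset.sum_const, Finset.card_univ, smul_eq_mul]
    have hcard3 : (Fintype.card D : ℕ) ≤ Nat.card {b : Ideal (𝓞 K) // J' ≤ b} := by
      have h1 : Nat.card D = Fintype.card D := Nat.card_eq_fintype_card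
      rw [← h1]
      have := Nat.card_mono hdivfin (show D ⊆ {b : Ideal (𝓞 K) | J' ≤ b} from fun b hb => hb.1)
      exact this
    -- put it together over ℝ
    have hdiv := hC k hk0
    have hk0R : (0 : ℝ) < (k : ℝ) := by exact_mod_cast hk0
    have hfinal : (Nat.card S : ℝ) ≤ (C * (k : ℝ) ^ ξ) * (k : ℝ) ^ (n - 2 : ℕ) := by
      calc (Nat.card S : ℝ) ≤ ((Fintype.card D) * k ^ (n - 2) : ℕ) := by
            exact_mod_cast le_trans hcard1 hcard2
        _ = (Fintype.card D : ℝ) * ((k : ℝ) ^ (n - 2 : ℕ)) := by push_cast; ring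
        _ ≤ (Nat.card {b : Ideal (𝓞 K) // J' ≤ b} : ℝ) * ((k : ℝ) ^ (n - 2 : ℕ)) := by
            apply mul_le_mul_of_nonneg_right _ (by positivity)
            exact_mod_cast hcard3
        _ ≤ (C * (k : ℝ) ^ ξ) * (k : ℝ) ^ (n - 2 : ℕ) := by
            apply mul_le_mul_of_nonneg_right _ (by positivity)
            exact hdiv
    have hexp : (k : ℝ) ^ ((n : ℝ) - 2 + ξ) = (k : ℝ) ^ (n - 2 : ℕ) * (k : ℝ) ^ ξ := by
      rw [Real.rpow_add hk0R, ← Real.rpow_natCast ((k : ℝ)) (n - 2)]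
      congr 2
      push_cast [Nat.cast_sub hn2]
      ring
    rw [hexp]
    calc (Nat.card S : ℝ) ≤ (C * (k : ℝ) ^ ξ) * (k : ℝ) ^ (n - 2 : ℕ) := hfinal
      _ = C * ((k : ℝ) ^ (n - 2 : ℕ) * (k : ℝ) ^ ξ) := by ring
  · -- part 2
    intro k hk1
    have hk0 : 0 < k := by omega
    set v₀ : Fin n → ℕ := fun j => if j = ⟨0, hn0⟩ then 1 else k with hv₀def
    have hv₀box : ∀ j, 0 < v₀ j ∧ v₀ j ≤ k := by
      intro j
      by_cases h : j = ⟨0, hn0⟩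
      · simp only [hv₀def, h, if_true]
        omega
      · simp only [hv₀def, if_neg h]
        omega
    have hv₀not : ¬ (∃ z : 𝓞 L, Algebra.norm L (((∑ i, (v₀ i : ℤ) • ωK i : 𝓞 K) : K))
        = (k : L) * (z : L)) := by
      rintro ⟨z, hz⟩
      set w : 𝓞 K := ∑ i ∈ Finset.univ.erase ⟨0, hn0⟩, ωK i with hwdef
      set α₀ : 𝓞 K := ∑ i, (v₀ i : ℤ) • ωK i with hα₀def
      have hsplit : α₀ = 1 + ((k : ℕ) : 𝓞 K) * w := by
        rw [hα₀def]
        rw [← Finset.sum_erase_add _ _ (Finset.mem_univ ⟨0, hn0⟩)]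
        have h1 : ((v₀ ⟨0, hn0⟩ : ℤ)) • ωK ⟨0, hn0⟩ = 1 := by
          simp [hv₀def, hω1]
        have h2 : ∑ i ∈ Finset.univ.erase ⟨0, hn0⟩, ((v₀ i : ℤ)) • ωK i
            = ((k : ℕ) : 𝓞 K) * w := by
          rw [hwdef, Finset.mul_sum]
          apply Finset.sum_congr rfl
          intro i hi
          have hne : i ≠ ⟨0, hn0⟩ := (Finset.mem_erase.1 hi).1
          simp only [hv₀def, if_neg hne]
          rw [zsmul_eq_mul]
          push_cast
          ring
        rw [h1, h2]
        ring
      have hdvd : ((k : ℤ)) ^ 2 ∣ Algebra.norm ℤ α₀ := norm_int_sq_dvd L K hL2 k α₀ ⟨z, hz⟩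
      -- but the norm is ≡ 1 mod k
      have hdet : Algebra.norm ℤ α₀ = (Algebra.leftMulMatrix ωK α₀).det :=
        Algebra.norm_eq_matrix_det ωK α₀
      set φ := Int.castRingHom (ZMod k) with hφdef
      have hmap : φ.mapMatrix (Algebra.leftMulMatrix ωK α₀) = 1 := by
        have hM : Algebra.leftMulMatrix ωK α₀
            = 1 + (k : ℤ) • Algebra.leftMulMatrix ωK w := by
          rw [hsplit, map_add, map_one]
          congr 1
          rw [show ((k : ℕ) : 𝓞 K) * w = ((k : ℕ) : ℤ) • w by
            rw [zsmul_eq_mul]; push_cast; ring]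
          rw [map_smul]
        rw [hM, map_add, map_one]
        have : φ.mapMatrix ((k : ℤ) • Algebra.leftMulMatrix ωK w) = 0 := by
          ext i j
          simp only [RingHom.mapMatrix_apply, Matrix.map_apply, Matrix.smul_apply,
            Matrix.zero_apply, smul_eq_mul, map_mul, hφdef]
          have : ((k : ℤ) : ZMod k) = 0 := by
            push_cast
            exact ZMod.natCast_self k
          simp [this]
        rw [this, add_zero]
      have h1 : ((Algebra.norm ℤ α₀ : ℤ) : ZMod k) = 1 := by
        rw [hdet]
        have := RingHom.map_det φ (Algebra.leftMulMatrix ωK α₀)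
        rw [hmap, Matrix.det_one] at this
        exact this
      have h0 : ((Algebra.norm ℤ α₀ : ℤ) : ZMod k) = 0 := by
        rw [ZMod.intCast_zmod_eq_zero_iff_dvd]
        exact dvd_trans (dvd_pow_self _ (by norm_num : (2:ℕ) ≠ 0)) hdvd
      haveI : Fact (1 < k) := ⟨hk1⟩
      rw [h0] at h1
      exact zero_ne_one h1
    -- counting
    set w₀ : Fin n → Fin k := fun i => ⟨v₀ i - 1, by
      have := hv₀box i
      omega⟩ with hw₀def
    set g : {v : Fin n → ℕ //
          (∀ j, 0 < v j ∧ v j ≤ k)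
          ∧ ∃ z : 𝓞 L, Algebra.norm L (((∑ i, (v i : ℤ) • ωK i : 𝓞 K) : K))
              = (k : L) * (z : L)} → {u : Fin n → Fin k // u ≠ w₀} := fun v =>
      ⟨fun i => ⟨v.1 i - 1, by have := (v.2.1 i); omega⟩, by
        intro hcontra
        apply hv₀not
        have hveq : v.1 = v₀ := by
          funext i
          have h1 := congrFun hcontra i
          have h2 : (v.1 i - 1 : ℕ) = v₀ i - 1 := congrArg Fin.val h1
          have h3 := (v.2.1 i)
          have h4 := hv₀box i
          omega
        rw [← hveq]
        exact v.2.2⟩ with hgdef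
    have hginj : Function.Injective g := by
      intro v w heq
      apply Subtype.ext
      funext i
      have h0 := Subtype.ext_iff.1 heq
      have h1 := congrFun h0 i
      have h2 : (v.1 i - 1 : ℕ) = w.1 i - 1 := congrArg Fin.val h1
      have h3 := (v.2.1 i)
      have h4 := (w.2.1 i)
      omega
    have hcard : Nat.card {v : Fin n → ℕ //
          (∀ j, 0 < v j ∧ v j ≤ k)
          ∧ ∃ z : 𝓞 L, Algebra.norm L (((∑ i, (v i : ℤ) • ωK i : 𝓞 K) : K))
              = (k : L) * (z : L)} ≤ Nat.card {u : Fin n → Fin k // u ≠ w₀} :=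
      Nat.card_le_card_of_injective g hginj
    have hcard2 : Nat.card {u : Fin n → Fin k // u ≠ w₀} = k ^ n - 1 := by
      rw [Nat.card_eq_fintype_card]
      have h1 : Fintype.card {u : Fin n → Fin k // u ≠ w₀}
          = Fintype.card (Fin n → Fin k) - Fintype.card {u : Fin n → Fin k // u = w₀} :=
        Fintype.card_subtype_compl _
      rw [h1, Fintype.card_subtype_eq w₀, Fintype.card_fun, Fintype.card_fin, Fintype.card_fin]
    have hfin : 0 < k ^ n := pow_pos hk0 n
    rw [hcard2] at hcard
    exact lt_of_le_of_lt hcard (Nat.sub_lt hfin one_pos)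
end
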